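/- arXiv:1412.4615 — 2 statements merged into one kernel-verified Lean document; each statement's English description precedes it below -/
import Mathlib

section
/- (Theorem 3.8, stated via the explicit distribution function.) Let Φ be a (sub)critical branching mechanism (α ≥ 0) with Lévy measure π ≠ 0, and fix x > 0. Define F : (0,∞) → ℝ by F(r) = exp(−x · (Φ^{(r,∞)})^{−1}(π((r,∞)))). Then F is nondecreasing, right-continuous, takes values in (0,1], and the Lebesgue–Stieltjes measure μ_F associated with F on (0,∞) and the measure π are mutually absolutely continuous: for every Borel set A ⊆ (0,∞), μ_F(A) = 0 if and only if π(A) = 0. -/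
open MeasureTheory Filter Set

/-- The branching mechanism `Φ(λ) = αλ + βλ² + ∫_{(0,∞)} (e^{-λθ} - 1 + λθ) π(dθ)`. -/
noncomputable def Phi (α β : ℝ) (π : Measure ℝ) (lam : ℝ) : ℝ :=
  α * lam + β * lam ^ 2 + ∫ θ, (Real.exp (-lam * θ) - 1 + lam * θ) ∂π

/-- The `(r,∞)`-truncated branching mechanism
`Φ^{(r,∞)}(λ) = Φ(λ) + ∫_{(r,∞)} (1 - e^{-λθ}) π(dθ)`. -/
noncomputable def PhiIoi (α β : ℝ) (π : Measure ℝ) (r lam : ℝ) : ℝ :=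
  Phi α β π lam + ∫ θ in Set.Ioi r, (1 - Real.exp (-lam * θ)) ∂π

/-- Auxiliary: the tail Laplace-type integral `∫_{(r,∞)} e^{-λθ} π(dθ)`. -/
noncomputable def Tint (π : Measure ℝ) (r lam : ℝ) : ℝ :=
  ∫ θ in Set.Ioi r, Real.exp (-lam * θ) ∂π

/-! ### Elementary exponential inequalities -/

lemma exp_ineq1 (t : ℝ) : 1 - t ≤ Real.exp (-t) := by
  have := Real.add_one_le_exp (-t); linarith

lemma exp_ineq2 {t : ℝ} (ht : 0 ≤ t) : Real.exp (-t) - 1 + t ≤ t ^ 2 := by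
  have h0 : (0:ℝ) < 1 + t := by linarith
  have h1 : Real.exp (-t) ≤ 1 / (1 + t) := by
    rw [Real.exp_neg, one_div]
    exact inv_anti₀ h0 (by have := Real.add_one_le_exp t; linarith)
  have h2 : 1 / (1 + t) ≤ 1 - t + t ^ 2 := by
    rw [div_le_iff₀ h0]; nlinarith
  linarith

lemma exp_ineq3 {s : ℝ} (hs : 0 ≤ s) : s * Real.exp (-s) ≤ 1 - Real.exp (-s) := by
  have h := Real.add_one_le_exp s
  have hp := Real.exp_pos (-s)
  have : Real.exp s * Real.exp (-s) = 1 := by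
    rw [← Real.exp_add]; simp
  nlinarith

lemma exp_ineq4 {w v θ : ℝ} (hw : 0 ≤ w) (hwv : w ≤ v) (hθ : 0 ≤ θ) :
    Real.exp (-(w*θ)) - Real.exp (-(v*θ)) ≤ (v - w) * θ := by
  have e1 : Real.exp (-(v*θ)) = Real.exp (-(w*θ)) * Real.exp (-((v-w)*θ)) := by
    rw [← Real.exp_add]; ring_nf
  have h1 : Real.exp (-(w*θ)) ≤ 1 := Real.exp_le_one_iff.mpr (by nlinarith)
  have h2 : 1 - Real.exp (-((v-w)*θ)) ≤ (v-w)*θ := by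
    have := exp_ineq1 ((v-w)*θ); linarith
  have h3 : 0 ≤ 1 - Real.exp (-((v-w)*θ)) := by
    have : Real.exp (-((v-w)*θ)) ≤ 1 := Real.exp_le_one_iff.mpr (by nlinarith)
    linarith
  calc Real.exp (-(w*θ)) - Real.exp (-(v*θ))
      = Real.exp (-(w*θ)) * (1 - Real.exp (-((v-w)*θ))) := by rw [e1]; ring
    _ ≤ 1 * (1 - Real.exp (-((v-w)*θ))) := by nlinarith [Real.exp_pos (-(w*θ))]
    _ ≤ (v-w)*θ := by linarith

lemma exp_ineq4' {w v θ : ℝ} (hw : 0 ≤ w) (hwv : w < v) (hθ : 0 < θ) :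
    Real.exp (-(w*θ)) - Real.exp (-(v*θ)) < (v - w) * θ := by
  have e1 : Real.exp (-(v*θ)) = Real.exp (-(w*θ)) * Real.exp (-((v-w)*θ)) := by
    rw [← Real.exp_add]; ring_nf
  have h1 : Real.exp (-(w*θ)) ≤ 1 := Real.exp_le_one_iff.mpr (by nlinarith)
  have h2 : 1 - Real.exp (-((v-w)*θ)) < (v-w)*θ := by
    have := Real.add_one_lt_exp (x := -((v-w)*θ)) (by nlinarith)
    linarith
  have h3 : 0 ≤ 1 - Real.exp (-((v-w)*θ)) := by
    have : Real.exp (-((v-w)*θ)) ≤ 1 := Real.exp_le_one_iff.mpr (by nlinarith)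
    linarith
  calc Real.exp (-(w*θ)) - Real.exp (-(v*θ))
      = Real.exp (-(w*θ)) * (1 - Real.exp (-((v-w)*θ))) := by rw [e1]; ring
    _ ≤ 1 - Real.exp (-((v-w)*θ)) := by nlinarith [Real.exp_pos (-(w*θ))]
    _ < (v-w)*θ := h2

/-- `e^{-xw} - e^{-xv} ≥ x(v-w)e^{-xv}` for `0 ≤ w ≤ v`, `0 ≤ x`. -/
lemma exp_ineq5 {w v x : ℝ} (hwv : w ≤ v) (hx : 0 ≤ x) :
    x * (v - w) * Real.exp (-(x*v)) ≤ Real.exp (-(x*w)) - Real.exp (-(x*v)) := by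
  have e1 : Real.exp (-(x*w)) = Real.exp (-(x*v)) * Real.exp (x*(v-w)) := by
    rw [← Real.exp_add]; ring_nf
  have h2 : x*(v-w) + 1 ≤ Real.exp (x*(v-w)) := Real.add_one_le_exp _
  have hp := Real.exp_pos (-(x*v))
  nlinarith

/-- pointwise bound for the difference of integrands of `Phi`. -/
lemma g_diff_bound {w v va θ : ℝ} (hw : 0 ≤ w) (hwv : w ≤ v) (hva : v ≤ va) (hθ : 0 < θ) :
    (Real.exp (-v*θ) - 1 + v*θ) - (Real.exp (-w*θ) - 1 + w*θ)
      ≤ (v - w) * (max 1 (2*va) * min θ (θ^2)) := by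
  have hs' : 0 ≤ v - w := by linarith
  have hid : Real.exp (-v*θ) = Real.exp (-w*θ) * Real.exp (-((v-w)*θ)) := by
    rw [← Real.exp_add]; ring_nf
  have hb1 : (Real.exp (-v*θ) - 1 + v*θ) - (Real.exp (-w*θ) - 1 + w*θ) ≤ (v-w)*θ := by
    have hmono : Real.exp (-v*θ) ≤ Real.exp (-w*θ) :=
      Real.exp_le_exp.mpr (by nlinarith)
    linarith
  have hb2 : (Real.exp (-v*θ) - 1 + v*θ) - (Real.exp (-w*θ) - 1 + w*θ)
      ≤ (v-w) * (2*va) * θ^2 := by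
    have key : (Real.exp (-v*θ) - 1 + v*θ) - (Real.exp (-w*θ) - 1 + w*θ)
        = Real.exp (-w*θ) * (Real.exp (-((v-w)*θ)) - 1 + (v-w)*θ)
          + (v-w)*θ * (1 - Real.exp (-w*θ)) := by
      rw [hid]; ring
    have hA : Real.exp (-((v-w)*θ)) - 1 + (v-w)*θ ≤ ((v-w)*θ)^2 :=
      exp_ineq2 (by positivity)
    have hA0 : 0 ≤ Real.exp (-((v-w)*θ)) - 1 + (v-w)*θ := by
      have := exp_ineq1 ((v-w)*θ); linarith
    have hw1 : Real.exp (-w*θ) ≤ 1 := Real.exp_le_one_iff.mpr (by nlinarith)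
    have hB : 1 - Real.exp (-w*θ) ≤ w*θ := by
      have := exp_ineq1 (w*θ); rw [neg_mul]; linarith
    have hB0 : 0 ≤ 1 - Real.exp (-w*θ) := by linarith
    have hep := Real.exp_pos (-w*θ)
    calc (Real.exp (-v*θ) - 1 + v*θ) - (Real.exp (-w*θ) - 1 + w*θ)
        = Real.exp (-w*θ) * (Real.exp (-((v-w)*θ)) - 1 + (v-w)*θ)
          + (v-w)*θ * (1 - Real.exp (-w*θ)) := key
      _ ≤ 1 * ((v-w)*θ)^2 + (v-w)*θ * (w*θ) := by
          have t1 : Real.exp (-w*θ) * (Real.exp (-((v-w)*θ)) - 1 + (v-w)*θ)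
              ≤ 1 * ((v-w)*θ)^2 := by nlinarith
          have t2 : (v-w)*θ * (1 - Real.exp (-w*θ)) ≤ (v-w)*θ * (w*θ) := by
            have : 0 ≤ (v-w)*θ := by positivity
            nlinarith
          linarith
      _ = (v-w) * v * θ^2 := by ring
      _ ≤ (v-w) * (2*va) * θ^2 := by
          have hfac : 0 ≤ (v - w) * θ^2 := mul_nonneg hs' (sq_nonneg θ)
          nlinarith [mul_nonneg hfac (by linarith : (0:ℝ) ≤ 2*va - v)]
  rcases le_or_gt θ 1 with hθ1 | hθ1
  · have hmin : min θ (θ^2) = θ^2 := min_eq_right (by nlinarith)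
    rw [hmin]
    have h1 : (2*va) ≤ max 1 (2*va) := le_max_right _ _
    have h2 : (v-w) * ((2*va) * θ^2) ≤ (v-w) * (max 1 (2*va) * θ^2) :=
      mul_le_mul_of_nonneg_left (mul_le_mul_of_nonneg_right h1 (sq_nonneg θ)) hs'
    have e : (v-w) * (2*va) * θ^2 = (v-w) * ((2*va) * θ^2) := by ring
    linarith
  · have hmin : min θ (θ^2) = θ := min_eq_left (by nlinarith)
    rw [hmin]
    have h1 : (1:ℝ) ≤ max 1 (2*va) := le_max_left _ _
    have h2 : (v-w) * (1*θ) ≤ (v-w) * (max 1 (2*va) * θ) :=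
      mul_le_mul_of_nonneg_left (mul_le_mul_of_nonneg_right h1 hθ.le) hs'
    have e : (v-w)*θ = (v-w) * (1*θ) := by ring
    linarith

/-! ### Measure-theoretic auxiliary lemmas -/

section aux

variable {α β : ℝ} {π : Measure ℝ}

lemma aux_ae (hsupp : π (Set.Iic 0) = 0) : ∀ᵐ θ ∂π, 0 < θ := by
  rw [ae_iff]; convert hsupp using 2; ext θ; simp [not_lt]

lemma tail_finite (hint : Integrable (fun θ => min θ (θ ^ 2)) π) {r : ℝ} (hr : 0 < r) :
    π (Set.Ioi r) < ⊤ := by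
  have h1 : Set.Ioi r ⊆ {θ : ℝ | min r (r^2) ≤ min θ (θ^2)} := by
    intro θ hθ
    simp only [Set.mem_Ioi] at hθ
    have : 0 < θ := lt_trans hr hθ
    exact min_le_min hθ.le (by nlinarith)
  calc π (Set.Ioi r) ≤ π {θ : ℝ | min r (r^2) ≤ min θ (θ^2)} := measure_mono h1
    _ < ⊤ := by
        refine Integrable.measure_ge_lt_top hint ?_
        positivity

lemma integrable_g (hsupp : π (Set.Iic 0) = 0)
    (hint : Integrable (fun θ => min θ (θ ^ 2)) π) {l : ℝ} (hl : 0 ≤ l) :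
    Integrable (fun θ => Real.exp (-l * θ) - 1 + l * θ) π := by
  have hm : AEStronglyMeasurable (fun θ => Real.exp (-l * θ) - 1 + l * θ) π := by
    apply Continuous.aestronglyMeasurable; continuity
  refine Integrable.mono' (g := fun θ => (l + l^2) * min θ (θ^2)) (hint.const_mul _) hm ?_
  filter_upwards [aux_ae hsupp] with θ hθ
  have hg0 : 0 ≤ Real.exp (-l * θ) - 1 + l * θ := by
    have := exp_ineq1 (l * θ); rw [neg_mul]; linarith
  rw [Real.norm_eq_abs, abs_of_nonneg hg0]
  have h1 : Real.exp (-l*θ) - 1 + l*θ ≤ l*θ := by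
    have : Real.exp (-l*θ) ≤ 1 := Real.exp_le_one_iff.mpr (by nlinarith)
    linarith
  have h2 : Real.exp (-l*θ) - 1 + l*θ ≤ (l*θ)^2 := by
    have := exp_ineq2 (t := l*θ) (by positivity); rw [neg_mul]; linarith
  rcases le_or_gt θ 1 with hθ1 | hθ1
  · have : min θ (θ^2) = θ^2 := min_eq_right (by nlinarith)
    rw [this]; nlinarith
  · have : min θ (θ^2) = θ := min_eq_left (by nlinarith)
    rw [this]; nlinarith

lemma integrableOn_exp {r : ℝ} (hfin : π (Set.Ioi r) ≠ ⊤) (hr : 0 < r) {l : ℝ} (hl : 0 ≤ l) :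
    IntegrableOn (fun θ => Real.exp (-l * θ)) (Set.Ioi r) π := by
  have hm : AEStronglyMeasurable (fun θ => Real.exp (-l * θ)) (π.restrict (Set.Ioi r)) := by
    apply Continuous.aestronglyMeasurable; continuity
  refine Integrable.mono' (g := fun _ => (1:ℝ)) (integrableOn_const hfin) hm ?_
  filter_upwards [ae_restrict_mem measurableSet_Ioi] with θ hθ
  rw [Real.norm_eq_abs, abs_of_nonneg (Real.exp_pos _).le]
  exact Real.exp_le_one_iff.mpr (by simp only [Set.mem_Ioi] at hθ; nlinarith)

lemma integrableOn_id_Ioi (hint : Integrable (fun θ => min θ (θ ^ 2)) π) {a : ℝ} (ha : 0 < a) :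
    IntegrableOn (fun θ => θ) (Set.Ioi a) π := by
  have hm : AEStronglyMeasurable (fun θ : ℝ => θ) (π.restrict (Set.Ioi a)) :=
    aestronglyMeasurable_id
  refine Integrable.mono' (g := fun θ => max 1 (1/a) * min θ (θ^2)) ((hint.const_mul _).integrableOn) hm ?_
  filter_upwards [ae_restrict_mem measurableSet_Ioi] with θ hθ
  simp only [Set.mem_Ioi] at hθ
  have hθ0 : 0 < θ := lt_trans ha hθ
  rw [Real.norm_eq_abs, abs_of_nonneg hθ0.le]
  rcases le_or_gt 1 θ with h1 | h1
  · have : min θ (θ^2) = θ := min_eq_left (by nlinarith)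
    rw [this]
    nlinarith [le_max_left (1:ℝ) (1/a)]
  · have : min θ (θ^2) = θ^2 := min_eq_right (by nlinarith)
    rw [this]
    have h2 : 1/a ≤ max 1 (1/a) := le_max_right _ _
    have h3 : θ ≤ θ^2 / a := by rw [le_div_iff₀ ha]; nlinarith
    have h4 : θ^2/a ≤ max 1 (1/a) * θ^2 := by
      rw [div_eq_mul_inv, ← one_div]
      nlinarith [sq_nonneg θ]
    linarith

lemma Phi_zero : Phi α β π 0 = 0 := by
  simp [Phi]

lemma Phi_strictMonoOn (hα : 0 ≤ α) (hβ : 0 ≤ β) (hsupp : π (Set.Iic 0) = 0)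
    (hint : Integrable (fun θ => min θ (θ ^ 2)) π) (hπ0 : 0 < π (Set.Ioi 0)) :
    StrictMonoOn (Phi α β π) (Set.Ici 0) := by
  intro w hw v hv hwv
  simp only [Set.mem_Ici] at hw hv
  have key : 0 < ∫ θ, ((Real.exp (-v * θ) - 1 + v * θ) - (Real.exp (-w * θ) - 1 + w * θ)) ∂π := by
    rw [integral_pos_iff_support_of_nonneg_ae]
    · refine lt_of_lt_of_le hπ0 (measure_mono ?_)
      intro θ hθ
      simp only [Set.mem_Ioi] at hθ
      simp only [Function.mem_support]
      have := exp_ineq4' hw hwv hθ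
      intro hcon
      rw [neg_mul, neg_mul] at hcon
      nlinarith
    · filter_upwards [aux_ae hsupp] with θ hθ
      have := exp_ineq4 hw hwv.le hθ.le
      simp only [Pi.zero_apply, neg_mul]
      nlinarith
    · exact ((integrable_g hsupp hint (hw.trans hwv.le)).sub (integrable_g hsupp hint hw))
  have hi : ∫ θ, ((Real.exp (-v * θ) - 1 + v * θ) - (Real.exp (-w * θ) - 1 + w * θ)) ∂π
      = (∫ θ, (Real.exp (-v * θ) - 1 + v * θ) ∂π) - ∫ θ, (Real.exp (-w * θ) - 1 + w * θ) ∂π :=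
    integral_sub (integrable_g hsupp hint (hw.trans hwv.le)) (integrable_g hsupp hint hw)
  rw [hi] at key
  simp only [Phi]
  have ha1 : α * w ≤ α * v := mul_le_mul_of_nonneg_left hwv.le hα
  have hb1 : β * w^2 ≤ β * v^2 := mul_le_mul_of_nonneg_left (by nlinarith) hβ
  linarith

lemma Tint_nonneg {r l : ℝ} : 0 ≤ Tint π r l :=
  integral_nonneg fun θ => (Real.exp_pos _).le

lemma Tint_le_measure {r l : ℝ} (hfin : π (Set.Ioi r) ≠ ⊤) (hl : 0 ≤ l) (hr : 0 < r) :
    Tint π r l ≤ (π (Set.Ioi r)).toReal := by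
  have : Tint π r l ≤ ∫ _ in Set.Ioi r, (1:ℝ) ∂π := by
    refine integral_mono_ae ?_ (integrableOn_const hfin) ?_
    · exact integrableOn_exp hfin hr hl
    · filter_upwards [ae_restrict_mem measurableSet_Ioi] with θ hθ
      simp only [Set.mem_Ioi] at hθ
      exact Real.exp_le_one_iff.mpr (by nlinarith)
  simp at this; exact this

lemma Tint_anti_l {r w v : ℝ} (hr : 0 < r) (hfin : π (Set.Ioi r) ≠ ⊤) (hw : 0 ≤ w) (hwv : w ≤ v) :
    Tint π r v ≤ Tint π r w := by
  refine integral_mono_ae (integrableOn_exp hfin hr (hw.trans hwv)) (integrableOn_exp hfin hr hw) ?_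
  filter_upwards [ae_restrict_mem measurableSet_Ioi] with θ hθ
  simp only [Set.mem_Ioi] at hθ
  have hθ0 : 0 < θ := lt_trans hr hθ
  rw [neg_mul, neg_mul]
  exact Real.exp_le_exp.mpr (by nlinarith)

lemma psi_strictMonoOn (hα : 0 ≤ α) (hβ : 0 ≤ β) (hsupp : π (Set.Iic 0) = 0)
    (hint : Integrable (fun θ => min θ (θ ^ 2)) π) (hπ0 : 0 < π (Set.Ioi 0))
    {r : ℝ} (hr : 0 < r) (hfin : π (Set.Ioi r) ≠ ⊤) :
    StrictMonoOn (fun l => Phi α β π l - Tint π r l) (Set.Ici 0) := by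
  intro w hw v hv hwv
  simp only [Set.mem_Ici] at hw hv
  have h1 := Phi_strictMonoOn hα hβ hsupp hint hπ0 hw hv hwv
  have h2 := Tint_anti_l (π := π) hr hfin hw hwv.le
  simp only
  linarith

lemma Tint_split {r s l : ℝ} (hIr : IntegrableOn (fun θ => Real.exp (-l * θ)) (Set.Ioi r) π)
    (hrs : r ≤ s) :
    Tint π r l = (∫ θ in Set.Ioc r s, Real.exp (-l * θ) ∂π) + Tint π s l := by
  unfold Tint
  rw [← setIntegral_union (Set.Ioc_disjoint_Ioi le_rfl) measurableSet_Ioi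
    (hIr.mono_set Set.Ioc_subset_Ioi_self) (hIr.mono_set (Set.Ioi_subset_Ioi hrs)),
    Set.Ioc_union_Ioi_eq_Ioi hrs]

lemma Tint_of_null {r : ℝ} (h : π (Set.Ioi r) = 0) (l : ℝ) : Tint π r l = 0 := by
  unfold Tint
  rw [Measure.restrict_eq_zero.mpr h, integral_zero_measure]

lemma Tint_anti_r {r s l : ℝ} (hrs : r ≤ s)
    (hIr : IntegrableOn (fun θ => Real.exp (-l * θ)) (Set.Ioi r) π) :
    Tint π s l ≤ Tint π r l := by
  apply setIntegral_mono_set hIr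
  · filter_upwards with θ using (Real.exp_pos _).le
  · exact (Set.Ioi_subset_Ioi hrs).eventuallyLE

lemma tendsto_Phi (hsupp : π (Set.Iic 0) = 0)
    (hint : Integrable (fun θ => min θ (θ ^ 2)) π)
    {v : ℕ → ℝ} {V L : ℝ} (hv0 : ∀ n, 0 ≤ v n) (hvV : ∀ n, v n ≤ V)
    (hvt : Tendsto v atTop (nhds L)) :
    Tendsto (fun n => Phi α β π (v n)) atTop (nhds (Phi α β π L)) := by
  have hV : 0 ≤ V := le_trans (hv0 0) (hvV 0)
  unfold Phi
  have h1 : Tendsto (fun n => α * v n + β * v n ^ 2) atTop (nhds (α * L + β * L ^ 2)) := by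
    exact ((hvt.const_mul α).add ((hvt.pow 2).const_mul β))
  refine h1.add ?_
  refine tendsto_integral_of_dominated_convergence (fun θ => (V + V^2) * min θ (θ^2)) ?_ ?_ ?_ ?_
  · intro n
    apply Continuous.aestronglyMeasurable; continuity
  · exact hint.const_mul _
  · intro n
    filter_upwards [aux_ae hsupp] with θ hθ
    have hl := hv0 n
    have hlV := hvV n
    have hg0 : 0 ≤ Real.exp (-(v n) * θ) - 1 + (v n) * θ := by
      have := Real.add_one_le_exp (-(v n * θ)); rw [neg_mul]; linarith
    rw [Real.norm_eq_abs, abs_of_nonneg hg0]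
    have h1' : Real.exp (-(v n)*θ) - 1 + (v n)*θ ≤ (v n)*θ := by
      have : Real.exp (-(v n)*θ) ≤ 1 := Real.exp_le_one_iff.mpr (by nlinarith)
      linarith
    have h2 : Real.exp (-(v n)*θ) - 1 + (v n)*θ ≤ ((v n)*θ)^2 := by
      have h0 : (0:ℝ) < 1 + (v n)*θ := by nlinarith
      have ha : Real.exp (-((v n)*θ)) ≤ 1/(1 + (v n)*θ) := by
        rw [Real.exp_neg, one_div]
        exact inv_anti₀ h0 (by have := Real.add_one_le_exp ((v n)*θ); linarith)
      have hb : 1/(1 + (v n)*θ) ≤ 1 - (v n)*θ + ((v n)*θ)^2 := by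
        rw [div_le_iff₀ h0]; nlinarith
      rw [neg_mul]; linarith
    rcases le_or_gt θ 1 with hθ1 | hθ1
    · have : min θ (θ^2) = θ^2 := min_eq_right (by nlinarith)
      rw [this]
      have hh : (v n)^2 * θ^2 ≤ V^2 * θ^2 :=
        mul_le_mul_of_nonneg_right (by nlinarith) (sq_nonneg θ)
      nlinarith [sq_nonneg V, sq_nonneg θ]
    · have : min θ (θ^2) = θ := min_eq_left (by nlinarith)
      rw [this]
      have hh : (v n) * θ ≤ V * θ := mul_le_mul_of_nonneg_right hlV (by linarith)
      nlinarith [sq_nonneg V]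
  · filter_upwards with θ
    have hc : Continuous (fun l : ℝ => Real.exp (-l * θ) - 1 + l * θ) := by continuity
    exact (hc.tendsto L).comp hvt

lemma tendsto_Tint (hsupp : π (Set.Iic 0) = 0) {r : ℝ} (hr : 0 < r)
    (hfin : π (Set.Ioi r) ≠ ⊤)
    {s : ℕ → ℝ} (hs : ∀ n, r < s n) (hst : Tendsto s atTop (nhds r))
    {v : ℕ → ℝ} (hv0 : ∀ n, 0 ≤ v n) {L : ℝ}
    (hvt : Tendsto v atTop (nhds L)) :
    Tendsto (fun n => Tint π (s n) (v n)) atTop (nhds (Tint π r L)) := by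
  have key : ∀ (t l : ℝ), Tint π t l = ∫ θ, (Set.Ioi t).indicator (fun θ => Real.exp (-l * θ)) θ ∂π := by
    intro t l
    rw [integral_indicator measurableSet_Ioi]; rfl
  rw [key]
  simp only [key]
  refine tendsto_integral_of_dominated_convergence
    (fun θ => (Set.Ioi r).indicator (fun _ => (1:ℝ)) θ) ?_ ?_ ?_ ?_
  · intro n
    exact ((Continuous.aestronglyMeasurable (by continuity)).indicator measurableSet_Ioi)
  · rw [integrable_indicator_iff measurableSet_Ioi]
    exact integrableOn_const hfin
  · intro n
    filter_upwards [aux_ae hsupp] with θ hθ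
    by_cases hmem : θ ∈ Set.Ioi (s n)
    · rw [Set.indicator_of_mem hmem, Set.indicator_of_mem (Set.Ioi_subset_Ioi (hs n).le hmem)]
      rw [Real.norm_eq_abs, abs_of_nonneg (Real.exp_pos _).le]
      exact Real.exp_le_one_iff.mpr (by nlinarith [hv0 n])
    · rw [Set.indicator_of_notMem hmem]
      simp only [norm_zero]
      exact Set.indicator_nonneg (fun _ _ => zero_le_one) θ
  · filter_upwards with θ
    by_cases hmem : θ ∈ Set.Ioi r
    · simp only [Set.mem_Ioi] at hmem
      have hev : ∀ᶠ n in atTop, s n < θ := hst.eventually_lt_const hmem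
      have hc : Continuous (fun l : ℝ => Real.exp (-l * θ)) := by continuity
      have h2 : Tendsto (fun n => Real.exp (-(v n) * θ)) atTop (nhds (Real.exp (-L * θ))) :=
        (hc.tendsto L).comp hvt
      rw [Set.indicator_of_mem (by exact hmem : θ ∈ Set.Ioi r)]
      refine Tendsto.congr' ?_ h2
      filter_upwards [hev] with n hn
      rw [Set.indicator_of_mem (by exact hn : θ ∈ Set.Ioi (s n))]
    · rw [Set.indicator_of_notMem hmem]
      have : ∀ n, (Set.Ioi (s n)).indicator (fun θ => Real.exp (-(v n) * θ)) θ = 0 := by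
        intro n
        apply Set.indicator_of_notMem
        simp only [Set.mem_Ioi, not_lt] at hmem ⊢
        exact hmem.trans (hs n).le
      exact Tendsto.congr (fun n => (this n).symm) tendsto_const_nhds

end aux

/-! ### Stieltjes-function comparison machinery -/

lemma stieltjes_measure_le (f g : StieltjesFunction ℝ)
    (h : ∀ r s : ℝ, r ≤ s → f s - f r ≤ g s - g r) : f.measure ≤ g.measure := by
  set D : StieltjesFunction ℝ :=
    { toFun := fun t => g t - f t
      mono' := fun a b hab => by have := h a b hab; dsimp only; linarith
      right_continuous' := fun t => (g.right_continuous t).sub (f.right_continuous t) } with hD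
  have hg : g.measure = f.measure + D.measure := by
    refine Measure.ext_of_Ioc _ _ (fun a b hab => ?_)
    rw [Measure.add_apply, f.measure_Ioc, g.measure_Ioc, D.measure_Ioc]
    have h1 : 0 ≤ f b - f a := by have := f.mono hab.le; linarith
    have h2 : (D b : ℝ) - D a = (g b - g a) - (f b - f a) := by
      show (g b - f b) - (g a - f a) = _; ring
    rw [h2, ← ENNReal.ofReal_add h1 (by have := h a b hab.le; linarith)]
    ring_nf
  rw [hg]
  exact Measure.le_add_right le_rfl

lemma mono_seq_cwa {f : ℝ → ℝ} {t : ℝ} {s : ℕ → ℝ}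
    (hmono : MonotoneOn f (Set.Ici t)) (hs : ∀ n, t < s n)
    (hft : Tendsto (fun n => f (s n)) atTop (nhds (f t))) :
    ContinuousWithinAt f (Set.Ici t) t := by
  rw [ContinuousWithinAt, Metric.tendsto_nhdsWithin_nhds]
  intro ε hε
  have : ∀ᶠ n in atTop, f (s n) - f t < ε := by
    have := hft.sub_const (f t)
    have h2 := (Metric.tendsto_nhds.mp this) ε hε
    filter_upwards [h2] with n hn
    rw [Real.dist_eq] at hn
    have : |f (s n) - f t| < ε := by
      convert hn using 2; ring
    exact lt_of_le_of_lt (le_abs_self _) this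
  obtain ⟨n, hn⟩ := this.exists
  refine ⟨s n - t, by linarith [hs n], fun y hy hd => ?_⟩
  rw [Real.dist_eq] at hd ⊢
  simp only [Set.mem_Ici] at hy
  have hy2 : y ≤ s n := by
    rcases abs_lt.mp hd with ⟨h1, h2⟩; linarith
  have l1 : f t ≤ f y := hmono Set.self_mem_Ici hy hy
  have l2 : f y ≤ f (s n) := hmono hy (Set.mem_Ici.mpr (by linarith [hs n])) hy2
  rw [abs_of_nonneg (by linarith)]
  linarith

lemma restrict_eq_of_Ioc (μ ν : Measure ℝ) {a b : ℝ}
    (hfin : μ (Set.Ioc a b) ≠ ⊤)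
    (h : ∀ r s : ℝ, a ≤ r → r ≤ s → s ≤ b → μ (Set.Ioc r s) = ν (Set.Ioc r s)) :
    μ.restrict (Set.Ioc a b) = ν.restrict (Set.Ioc a b) := by
  haveI : IsFiniteMeasure (μ.restrict (Set.Ioc a b)) :=
    ⟨by rwa [Measure.restrict_apply_univ, lt_top_iff_ne_top]⟩
  refine Measure.ext_of_Ioc _ _ (fun r s hrs => ?_)
  rw [Measure.restrict_apply measurableSet_Ioc, Measure.restrict_apply measurableSet_Ioc,
    Set.Ioc_inter_Ioc]
  rcases le_or_gt (max r a) (min s b) with hle | hlt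
  · exact h _ _ (le_max_right r a) hle (min_le_right s b)
  · rw [Set.Ioc_eq_empty (by exact fun hc => absurd hc (not_lt.mpr hlt.le))]
    simp

lemma exists_clamped_stieltjes (f : ℝ → ℝ) (a b : ℝ) (hab : a ≤ b)
    (hmono : MonotoneOn f (Set.Icc a b))
    (hrc : ∀ t, a ≤ t → t < b → ContinuousWithinAt f (Set.Ici t) t) :
    ∃ H : StieltjesFunction ℝ, ∀ t, H t = f (max a (min t b)) := by
  have hclamp : ∀ t, max a (min t b) ∈ Set.Icc a b := fun t =>
    ⟨le_max_left _ _, max_le hab (min_le_right _ _)⟩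
  have hmc : Monotone (fun t => f (max a (min t b))) := by
    intro t1 t2 h12
    exact hmono (hclamp t1) (hclamp t2)
      (max_le_max le_rfl (min_le_min h12 le_rfl))
  refine ⟨{ toFun := fun t => f (max a (min t b)), mono' := hmc,
            right_continuous' := fun t => ?_ }, fun t => rfl⟩
  rcases le_or_gt b t with hbt | htb
  · have : ∀ y ∈ Set.Ici t, f (max a (min y b)) = f (max a (min t b)) := by
      intro y hy
      simp only [Set.mem_Ici] at hy
      rw [min_eq_right hbt, min_eq_right (hbt.trans hy)]
    exact (continuousWithinAt_const (b := f (max a (min t b)))).congr this (this t Set.self_mem_Ici)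
  · rcases lt_or_ge t a with hta | hat
    · have hev : Set.Ico t a ∈ nhdsWithin t (Set.Ici t) := Ico_mem_nhdsGE hta
      have hconst : ∀ y ∈ Set.Ico t a, f (max a (min y b)) = f a := by
        intro y hy
        rcases hy with ⟨_, hya⟩
        rw [max_eq_left]
        exact min_le_of_left_le hya.le
      have hvt : f (max a (min t b)) = f a := hconst t ⟨le_rfl, hta⟩
      rw [ContinuousWithinAt]
      refine Tendsto.congr' ?_ (by rw [hvt]; exact tendsto_const_nhds)
      filter_upwards [hev] with y hy
      exact (hconst y hy).symm
    · have h1 : ContinuousWithinAt f (Set.Ici t) t := hrc t hat htb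
      have hvt : f (max a (min t b)) = f t := by
        rw [min_eq_left htb.le, max_eq_right hat]
      have hev : Set.Ico t b ∈ nhdsWithin t (Set.Ici t) := Ico_mem_nhdsGE htb
      rw [ContinuousWithinAt, hvt]
      refine Tendsto.congr' ?_ h1
      filter_upwards [hev] with y hy
      rcases hy with ⟨hty, hyb⟩
      rw [min_eq_left hyb.le, max_eq_right (hat.trans hty)]

set_option maxHeartbeats 1000000

/-- Theorem 3.8, via the explicit distribution function
`F(r) = exp(-x (Φ^{(r,∞)})⁻¹(π((r,∞))))` of the global maximal jump:
`F` is nondecreasing, right-continuous, `(0,1]`-valued, and its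
Lebesgue–Stieltjes measure on `(0,∞)` and `π` are mutually absolutely continuous. -/
theorem global_maximal_jump_mutual_absolute_continuity
    (α β : ℝ) (hα : 0 ≤ α) (hβ : 0 ≤ β) (π : Measure ℝ)
    (hsupp : π (Set.Iic 0) = 0) (hσ : SigmaFinite π)
    (hint : Integrable (fun θ => min θ (θ ^ 2)) π)
    (hπne : π ≠ 0) (x : ℝ) (hx : 0 < x)
    (inv : ℝ → ℝ)
    (hinv : ∀ r : ℝ, 0 < r →
      0 ≤ inv r ∧ PhiIoi α β π r (inv r) = (π (Set.Ioi r)).toReal)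
    (F : ℝ → ℝ) (hF : ∀ r : ℝ, F r = Real.exp (-x * inv r)) :
    MonotoneOn F (Set.Ioi 0) ∧
    (∀ r : ℝ, 0 < r → ContinuousWithinAt F (Set.Ici r) r) ∧
    (∀ r : ℝ, 0 < r → F r ∈ Set.Ioc (0:ℝ) 1) ∧
    (∀ G : StieltjesFunction ℝ, (∀ r : ℝ, 0 < r → G r = F r) →
      ∀ A : Set ℝ, A ⊆ Set.Ioi 0 → MeasurableSet A →
        (G.measure A = 0 ↔ π A = 0)) := by
  -- basic positivity of π on (0,∞)
  have hπ0 : 0 < π (Set.Ioi 0) := by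
    rcases (((zero_le : (0:ENNReal) ≤ π (Set.Ioi 0))).eq_or_lt.imp Eq.symm id) with h | h
    · exfalso
      apply hπne
      have huniv : π Set.univ = 0 := by
        have : (Set.univ : Set ℝ) = Set.Iic 0 ∪ Set.Ioi 0 := by
          ext y; simp [le_or_gt]
        rw [this]
        exact measure_union_null hsupp h
      exact Measure.measure_univ_eq_zero.mp huniv
    · exact h
  have hfinm : ∀ r : ℝ, 0 < r → π (Set.Ioi r) ≠ ⊤ := fun r hr => (tail_finite hint hr).ne
  have hinv0 : ∀ r : ℝ, 0 < r → 0 ≤ inv r := fun r hr => (hinv r hr).1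
  -- the transformed equation
  have heq : ∀ r : ℝ, 0 < r → Phi α β π (inv r) = Tint π r (inv r) := by
    intro r hr
    obtain ⟨hnn, he⟩ := hinv r hr
    have hc : IntegrableOn (fun _ : ℝ => (1:ℝ)) (Set.Ioi r) π :=
      integrableOn_const (hfinm r hr)
    have hexp := integrableOn_exp (hfinm r hr) hr hnn
    have hsub : ∫ θ in Set.Ioi r, (1 - Real.exp (-(inv r) * θ)) ∂π
        = (π (Set.Ioi r)).toReal - Tint π r (inv r) := by
      rw [integral_sub hc hexp, setIntegral_const]
      simp [Tint, smul_eq_mul]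
      rfl
    unfold PhiIoi at he
    rw [hsub] at he
    linarith
  -- inv is antitone on (0,∞)
  have hanti : ∀ r s : ℝ, 0 < r → r ≤ s → inv s ≤ inv r := by
    intro r s hr hrs
    have hs0 : 0 < s := lt_of_lt_of_le hr hrs
    by_contra hcon
    push_neg at hcon
    have h1 := psi_strictMonoOn hα hβ hsupp hint hπ0 hs0 (hfinm s hs0)
      (Set.mem_Ici.mpr (hinv0 r hr)) (Set.mem_Ici.mpr (hinv0 s hs0)) hcon
    have h2 := heq s hs0
    have h3 : Tint π s (inv r) ≤ Tint π r (inv r) :=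
      Tint_anti_r hrs (integrableOn_exp (hfinm r hr) hr (hinv0 r hr))
    have h4 := heq r hr
    simp only at h1
    linarith
  -- F is monotone
  have conc1 : MonotoneOn F (Set.Ioi 0) := by
    intro r hr s hs hrs
    simp only [Set.mem_Ioi] at hr hs
    rw [hF r, hF s]
    exact Real.exp_le_exp.mpr (by nlinarith [hanti r s hr hrs])
  -- values of F
  have conc3 : ∀ r : ℝ, 0 < r → F r ∈ Set.Ioc (0:ℝ) 1 := by
    intro r hr
    rw [hF r]
    constructor
    · exact Real.exp_pos _
    · exact Real.exp_le_one_iff.mpr (by nlinarith [hinv0 r hr])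
  -- right-continuity of F
  have conc2 : ∀ r : ℝ, 0 < r → ContinuousWithinAt F (Set.Ici r) r := by
    intro r hr
    set s : ℕ → ℝ := fun n => r + 1/(n+1) with hsdef
    have hsgt : ∀ n, r < s n := by
      intro n
      have h : (0:ℝ) < 1/((n:ℝ)+1) := by positivity
      simp only [hsdef]
      linarith
    have hspos : ∀ n, 0 < s n := fun n => lt_trans hr (hsgt n)
    have hst : Tendsto s atTop (nhds r) := by
      have h0 : Tendsto (fun n : ℕ => 1/((n:ℝ)+1)) atTop (nhds 0) :=
        tendsto_one_div_add_atTop_nhds_zero_nat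
      have := h0.const_add r
      simpa [hsdef, one_div] using this
    set v : ℕ → ℝ := fun n => inv (s n) with hvdef
    have hv0 : ∀ n, 0 ≤ v n := fun n => hinv0 _ (hspos n)
    have hvV : ∀ n, v n ≤ inv r := fun n => hanti r (s n) hr (hsgt n).le
    have hmono : Monotone v := by
      intro m n hmn
      apply hanti (s n) (s m) (hspos n)
      simp only [hsdef]
      have h : 1/((n:ℝ)+1) ≤ 1/((m:ℝ)+1) := by
        apply one_div_le_one_div_of_le (by positivity)
        have : (m:ℝ) ≤ (n:ℝ) := Nat.cast_le.mpr hmn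
        linarith
      linarith
    have hbdd : BddAbove (Set.range v) := ⟨inv r, by rintro _ ⟨n, rfl⟩; exact hvV n⟩
    set L := ⨆ n, v n with hLdef
    have hvt : Tendsto v atTop (nhds L) := tendsto_atTop_ciSup hmono hbdd
    have hL0 : 0 ≤ L := (hv0 0).trans (le_ciSup hbdd 0)
    have h1 : Tendsto (fun n => Phi α β π (v n)) atTop (nhds (Phi α β π L)) :=
      tendsto_Phi hsupp hint hv0 hvV hvt
    have h2 : Tendsto (fun n => Tint π (s n) (v n)) atTop (nhds (Tint π r L)) :=
      tendsto_Tint hsupp hr (hfinm r hr) hsgt hst hv0 hvt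
    have h3 : (fun n => Phi α β π (v n)) = fun n => Tint π (s n) (v n) :=
      funext fun n => heq (s n) (hspos n)
    have h4 : Phi α β π L = Tint π r L := by
      rw [h3] at h1
      exact tendsto_nhds_unique h1 h2
    have h5 : L = inv r := by
      apply (psi_strictMonoOn hα hβ hsupp hint hπ0 hr (hfinm r hr)).injOn
        (Set.mem_Ici.mpr hL0) (Set.mem_Ici.mpr (hinv0 r hr))
      simp only
      rw [h4, heq r hr]
      ring
    have h6 : Tendsto (fun n => F (s n)) atTop (nhds (F r)) := by
      have ht : Tendsto (fun n => Real.exp (-x * v n)) atTop (nhds (Real.exp (-x * L))) :=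
        (Real.continuous_exp.tendsto _).comp (hvt.const_mul (-x))
      have he1 : (fun n => F (s n)) = fun n => Real.exp (-x * v n) :=
        funext fun n => hF (s n)
      have he2 : F r = Real.exp (-x * L) := by rw [hF r, h5]
      rw [he1, he2]
      exact ht
    exact mono_seq_cwa (conc1.mono (fun y hy => lt_of_lt_of_le hr hy)) hsgt h6
  -- inv vanishes where the tail vanishes
  have hzero : ∀ r : ℝ, 0 < r → π (Set.Ioi r) = 0 → inv r = 0 := by
    intro r hr h0
    have h1 := heq r hr
    rw [Tint_of_null h0] at h1
    by_contra hne
    have hpos : (0:ℝ) < inv r := lt_of_le_of_ne (hinv0 r hr) (Ne.symm hne)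
    have h2 := Phi_strictMonoOn hα hβ hsupp hint hπ0 Set.self_mem_Ici
      (Set.mem_Ici.mpr (hinv0 r hr)) hpos
    rw [Phi_zero] at h2
    linarith
  -- the key two-sided interval comparison
  have key : ∀ a b : ℝ, 0 < a → a < b → π (Set.Ioi b) ≠ 0 →
      ∃ K₁ K₂ : ℝ, 0 ≤ K₁ ∧ 0 ≤ K₂ ∧ ∀ r s : ℝ, a ≤ r → r ≤ s → s ≤ b →
        (F s - F r ≤ K₁ * (π (Set.Ioc r s)).toReal ∧
         (π (Set.Ioc r s)).toReal ≤ K₂ * (F s - F r)) := by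
    intro a b ha hab hb
    have hb0 : 0 < b := lt_trans ha hab
    set va := inv a with hvadef
    have hva0 : 0 ≤ va := hinv0 a ha
    -- choose M with π (Ioc b M) ≠ 0
    have hM : ∃ n : ℕ, π (Set.Ioc b (b + ((n:ℝ)+1))) ≠ 0 := by
      by_contra hcon
      push_neg at hcon
      apply hb
      have hcover : Set.Ioi b = ⋃ n : ℕ, Set.Ioc b (b + ((n:ℝ)+1)) := by
        ext θ
        simp only [Set.mem_Ioi, Set.mem_iUnion, Set.mem_Ioc]
        constructor
        · intro h
          obtain ⟨n, hn⟩ := exists_nat_ge (θ - b)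
          exact ⟨n, h, by linarith⟩
        · rintro ⟨n, h1, _⟩; exact h1
      rw [hcover]
      exact measure_iUnion_null fun n => hcon n
    obtain ⟨nM, hMne⟩ := hM
    set M := b + ((nM:ℝ)+1) with hMdef
    have hbM : b < M := by
      have : (0:ℝ) ≤ (nM:ℝ) := Nat.cast_nonneg nM
      simp only [hMdef]; linarith
    have hMfin : π (Set.Ioc b M) ≠ ⊤ :=
      ((measure_mono Set.Ioc_subset_Ioi_self).trans_lt (tail_finite hint hb0)).ne
    have hMpos : 0 < (π (Set.Ioc b M)).toReal := ENNReal.toReal_pos hMne hMfin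
    set E2 := Real.exp (-(2*va*M)) with hE2def
    set c := b * E2 * (π (Set.Ioc b M)).toReal with hcdef
    have hcpos : 0 < c := by
      apply mul_pos (mul_pos hb0 (Real.exp_pos _)) hMpos
    set Im := ∫ θ, min θ (θ^2) ∂π with hImdef
    have hIm0 : 0 ≤ Im := by
      apply integral_nonneg_of_ae
      filter_upwards [aux_ae hsupp] with θ hθ
      exact le_min hθ.le (by positivity)
    set CG := α + 2*β*va + max 1 (2*va) * Im with hCGdef
    have hmax0 : (0:ℝ) ≤ max 1 (2*va) := le_trans zero_le_one (le_max_left _ _)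
    have hCG0 : 0 ≤ CG := by
      have h1 : 0 ≤ 2*β*va := by positivity
      have h2 : 0 ≤ max 1 (2*va) * Im := mul_nonneg hmax0 hIm0
      simp only [hCGdef]; linarith
    set Ca := ∫ θ in Set.Ioi a, θ ∂π with hCadef
    have hCa0 : 0 ≤ Ca := by
      apply setIntegral_nonneg measurableSet_Ioi
      intro θ hθ
      exact le_of_lt (lt_trans ha hθ)
    refine ⟨x / c, Real.exp (va*b) * (CG + Ca) / (x * Real.exp (-(x*va))),
      div_nonneg hx.le hcpos.le,
      div_nonneg (mul_nonneg (Real.exp_pos _).le (by linarith)) (by positivity), ?_⟩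
    intro r s har hrs hsb
    have hr0 : 0 < r := lt_of_lt_of_le ha har
    have hs0 : 0 < s := lt_of_lt_of_le hr0 hrs
    set v := inv r with hvdef
    set w := inv s with hwdef
    have hw0 : 0 ≤ w := hinv0 s hs0
    have hwv : w ≤ v := hanti r s hr0 hrs
    have hv0 : 0 ≤ v := hw0.trans hwv
    have hvva : v ≤ va := hanti a r ha har
    have hwva : w ≤ va := hwv.trans hvva
    have hfinr : π (Set.Ioi r) ≠ ⊤ := hfinm r hr0
    have hfins : π (Set.Ioi s) ≠ ⊤ := hfinm s hs0
    have hfinrs : π (Set.Ioc r s) ≠ ⊤ :=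
      ((measure_mono Set.Ioc_subset_Ioi_self).trans_lt hfinr.lt_top).ne
    have hIv : IntegrableOn (fun θ => Real.exp (-v * θ)) (Set.Ioi r) π :=
      integrableOn_exp hfinr hr0 hv0
    have hsplit : Tint π r v = (∫ θ in Set.Ioc r s, Real.exp (-v * θ) ∂π) + Tint π s v :=
      Tint_split hIv hrs
    set I := ∫ θ in Set.Ioc r s, Real.exp (-v * θ) ∂π with hIdef
    have hstar : I = (Phi α β π v - Phi α β π w) + (Tint π s w - Tint π s v) := by
      have e1 := heq r hr0
      have e2 := heq s hs0
      rw [← hvdef] at e1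
      rw [← hwdef] at e2
      linarith [hsplit]
    have hIub : I ≤ (π (Set.Ioc r s)).toReal := by
      have h1 : I ≤ ∫ _ in Set.Ioc r s, (1:ℝ) ∂π := by
        refine integral_mono_ae (hIv.mono_set Set.Ioc_subset_Ioi_self)
          (integrableOn_const hfinrs) ?_
        filter_upwards [ae_restrict_mem measurableSet_Ioc] with θ hθ
        have hθ0 : 0 < θ := lt_trans hr0 hθ.1
        refine Real.exp_le_one_iff.mpr ?_
        rw [neg_mul]
        exact neg_nonpos.mpr (mul_nonneg hv0 hθ0.le)
      simp at h1; exact h1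
    have hIlb : Real.exp (-(va*b)) * (π (Set.Ioc r s)).toReal ≤ I := by
      have h1 : ∫ _ in Set.Ioc r s, Real.exp (-(va*b)) ∂π ≤ I := by
        refine integral_mono_ae (integrableOn_const hfinrs)
          (hIv.mono_set Set.Ioc_subset_Ioi_self) ?_
        filter_upwards [ae_restrict_mem measurableSet_Ioc] with θ hθ
        have hθ0 : 0 < θ := lt_trans hr0 hθ.1
        have hθb : θ ≤ b := hθ.2.trans hsb
        apply Real.exp_le_exp.mpr
        have hm : v*θ ≤ va*b := mul_le_mul hvva hθb hθ0.le hva0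
        linarith
      rw [setIntegral_const, smul_eq_mul, mul_comm] at h1
      exact h1
    have hPhimono := (Phi_strictMonoOn hα hβ hsupp hint hπ0).monotoneOn
    have hPhidiff_nonneg : 0 ≤ Phi α β π v - Phi α β π w :=
      sub_nonneg.mpr (hPhimono (Set.mem_Ici.mpr hw0) (Set.mem_Ici.mpr hv0) hwv)
    have hPhidiff_le : Phi α β π v - Phi α β π w ≤ (v - w) * CG := by
      have hgi_v := integrable_g hsupp hint hv0
      have hgi_w := integrable_g hsupp hint hw0
      have hgsub : (∫ θ, (Real.exp (-v*θ) - 1 + v*θ) ∂π) - ∫ θ, (Real.exp (-w*θ) - 1 + w*θ) ∂π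
          = ∫ θ, ((Real.exp (-v*θ) - 1 + v*θ) - (Real.exp (-w*θ) - 1 + w*θ)) ∂π :=
        (integral_sub hgi_v hgi_w).symm
      have hgle : ∫ θ, ((Real.exp (-v*θ) - 1 + v*θ) - (Real.exp (-w*θ) - 1 + w*θ)) ∂π
          ≤ (v - w) * max 1 (2*va) * Im := by
        have h1 : ∫ θ, ((Real.exp (-v*θ) - 1 + v*θ) - (Real.exp (-w*θ) - 1 + w*θ)) ∂π
            ≤ ∫ θ, ((v - w) * max 1 (2*va)) * min θ (θ^2) ∂π := by
          refine integral_mono_ae (hgi_v.sub hgi_w) (hint.const_mul _) ?_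
          filter_upwards [aux_ae hsupp] with θ hθ
          have := g_diff_bound hw0 hwv hvva hθ
          calc (Real.exp (-v*θ) - 1 + v*θ) - (Real.exp (-w*θ) - 1 + w*θ)
              ≤ (v - w) * (max 1 (2*va) * min θ (θ^2)) := this
            _ = ((v - w) * max 1 (2*va)) * min θ (θ^2) := by ring
        rw [integral_const_mul] at h1
        calc ∫ θ, ((Real.exp (-v*θ) - 1 + v*θ) - (Real.exp (-w*θ) - 1 + w*θ)) ∂π
            ≤ ((v - w) * max 1 (2*va)) * Im := h1
          _ = (v - w) * max 1 (2*va) * Im := by ring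
      have hquad : β * v^2 - β * w^2 ≤ 2*β*va*(v - w) := by
        have e1 : β * v^2 - β * w^2 = β * ((v+w)*(v-w)) := by ring
        have e2 : β * ((v+w)*(v-w)) ≤ β * ((2*va)*(v-w)) :=
          mul_le_mul_of_nonneg_left
            (mul_le_mul_of_nonneg_right (by linarith) (by linarith)) hβ
        have e3 : β * ((2*va)*(v-w)) = 2*β*va*(v-w) := by ring
        linarith
      have hlin : α * v - α * w ≤ α * (v - w) := le_of_eq (by ring)
      simp only [Phi]
      have expand : (v - w) * CG = α*(v-w) + 2*β*va*(v-w) + (v-w) * max 1 (2*va) * Im := by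
        simp only [hCGdef]; ring
      rw [expand]
      linarith [hgsub ▸ hgle]
    have hTdiff : Tint π s w - Tint π s v
        = ∫ θ in Set.Ioi s, (Real.exp (-w*θ) - Real.exp (-v*θ)) ∂π := by
      rw [integral_sub (integrableOn_exp hfins hs0 hw0) (integrableOn_exp hfins hs0 hv0)]
      rfl
    have hTdub : Tint π s w - Tint π s v ≤ (v - w) * Ca := by
      rw [hTdiff]
      have has : a ≤ s := har.trans hrs
      have hIds : IntegrableOn (fun θ => θ) (Set.Ioi s) π :=
        (integrableOn_id_Ioi hint ha).mono_set (Set.Ioi_subset_Ioi has)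
      have step1 : ∫ θ in Set.Ioi s, (Real.exp (-w*θ) - Real.exp (-v*θ)) ∂π
          ≤ ∫ θ in Set.Ioi s, (v - w)*θ ∂π := by
        refine integral_mono_ae
          ((integrableOn_exp hfins hs0 hw0).sub (integrableOn_exp hfins hs0 hv0))
          (hIds.const_mul _) ?_
        filter_upwards [ae_restrict_mem measurableSet_Ioi] with θ hθ
        have hθ0 : 0 < θ := lt_trans hs0 hθ
        have h4 := exp_ineq4 hw0 hwv hθ0.le
        have ew : -w*θ = -(w*θ) := by ring
        have ev : -v*θ = -(v*θ) := by ring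
        rw [ew, ev]
        exact h4
      have step2 : ∫ θ in Set.Ioi s, (v - w)*θ ∂π ≤ (v - w) * Ca := by
        rw [integral_const_mul]
        apply mul_le_mul_of_nonneg_left ?_ (by linarith : (0:ℝ) ≤ v - w)
        apply setIntegral_mono_set (integrableOn_id_Ioi hint ha) ?_ (Set.Ioi_subset_Ioi has).eventuallyLE
        filter_upwards [ae_restrict_mem measurableSet_Ioi] with θ hθ
        exact le_of_lt (lt_trans ha hθ)
      linarith
    have hTd0 : 0 ≤ Tint π s w - Tint π s v :=
      sub_nonneg.mpr (Tint_anti_l hs0 hfins hw0 hwv)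
    -- pointwise lower bound on Ioc b M
    have hpt : ∀ θ : ℝ, b < θ → θ ≤ M →
        (v - w) * (b * E2) ≤ Real.exp (-w*θ) - Real.exp (-v*θ) := by
      intro θ h1 h2
      have hθ0 : 0 < θ := lt_trans hb0 h1
      have hM0 : 0 < M := lt_trans hb0 hbM
      set t := (v - w)*θ with htdef
      have ht0 : 0 ≤ t := mul_nonneg (by linarith) hθ0.le
      have htM : t ≤ va*M := by
        have hvw2 : v - w ≤ va := by linarith
        simp only [htdef]
        exact mul_le_mul hvw2 h2 hθ0.le hva0
      have e1 : Real.exp (-v*θ) = Real.exp (-w*θ) * Real.exp (-t) := by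
        rw [← Real.exp_add]
        congr 1
        simp only [htdef]; ring
      have i3 : t * Real.exp (-t) ≤ 1 - Real.exp (-t) := exp_ineq3 ht0
      have l1 : Real.exp (-(va*M)) ≤ Real.exp (-w*θ) := by
        apply Real.exp_le_exp.mpr
        have hm : w*θ ≤ va*M := mul_le_mul hwva h2 hθ0.le hva0
        rw [neg_mul]
        linarith
      have l2 : Real.exp (-(va*M)) ≤ Real.exp (-t) := Real.exp_le_exp.mpr (by linarith)
      have l3 : 0 ≤ 1 - Real.exp (-t) := by
        have : Real.exp (-t) ≤ 1 := Real.exp_le_one_iff.mpr (by linarith)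
        linarith
      have step1 : Real.exp (-w*θ) - Real.exp (-v*θ) = Real.exp (-w*θ) * (1 - Real.exp (-t)) := by
        rw [e1]; ring
      have m2 : t * Real.exp (-(va*M)) ≤ 1 - Real.exp (-t) :=
        le_trans (mul_le_mul_of_nonneg_left l2 ht0) i3
      have step2 : Real.exp (-(va*M)) * (t * Real.exp (-(va*M)))
          ≤ Real.exp (-w*θ) * (1 - Real.exp (-t)) := by
        have m3 : 0 ≤ t * Real.exp (-(va*M)) := by positivity
        calc Real.exp (-(va*M)) * (t * Real.exp (-(va*M)))
            ≤ Real.exp (-w*θ) * (t * Real.exp (-(va*M))) :=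
              mul_le_mul_of_nonneg_right l1 m3
          _ ≤ Real.exp (-w*θ) * (1 - Real.exp (-t)) :=
              mul_le_mul_of_nonneg_left m2 (Real.exp_pos _).le
      have e2 : E2 = Real.exp (-(va*M)) * Real.exp (-(va*M)) := by
        simp only [hE2def]
        rw [← Real.exp_add]
        congr 1; ring
      have final : (v - w) * (b * E2) ≤ Real.exp (-(va*M)) * (t * Real.exp (-(va*M))) := by
        rw [e2]
        have hbt : (v - w)*b ≤ t := by
          simp only [htdef]
          exact mul_le_mul_of_nonneg_left h1.le (by linarith)
        calc (v - w) * (b * (Real.exp (-(va*M)) * Real.exp (-(va*M))))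
            = ((v - w)*b) * (Real.exp (-(va*M)) * Real.exp (-(va*M))) := by ring
          _ ≤ t * (Real.exp (-(va*M)) * Real.exp (-(va*M))) :=
              mul_le_mul_of_nonneg_right hbt (by positivity)
          _ = Real.exp (-(va*M)) * (t * Real.exp (-(va*M))) := by ring
      linarith
    have hTdlb : (v - w) * c ≤ Tint π s w - Tint π s v := by
      rw [hTdiff]
      have hsub2 : Set.Ioc b M ⊆ Set.Ioi s := fun θ hθ => lt_of_le_of_lt hsb hθ.1
      have hfint : IntegrableOn (fun θ => Real.exp (-w*θ) - Real.exp (-v*θ)) (Set.Ioi s) π :=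
        (integrableOn_exp hfins hs0 hw0).sub (integrableOn_exp hfins hs0 hv0)
      have mono1 : ∫ _ in Set.Ioc b M, ((v - w) * (b * E2)) ∂π
          ≤ ∫ θ in Set.Ioc b M, (Real.exp (-w*θ) - Real.exp (-v*θ)) ∂π := by
        refine integral_mono_ae (integrableOn_const hMfin)
          (hfint.mono_set hsub2) ?_
        filter_upwards [ae_restrict_mem measurableSet_Ioc] with θ hθ
        exact hpt θ hθ.1 hθ.2
      have mono2 : ∫ θ in Set.Ioc b M, (Real.exp (-w*θ) - Real.exp (-v*θ)) ∂π
          ≤ ∫ θ in Set.Ioi s, (Real.exp (-w*θ) - Real.exp (-v*θ)) ∂π := by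
        refine setIntegral_mono_set hfint ?_ hsub2.eventuallyLE
        filter_upwards [ae_restrict_mem measurableSet_Ioi] with θ hθ
        simp only [Pi.zero_apply]
        have hθ0 : 0 < θ := lt_trans hs0 hθ
        have hm : w*θ ≤ v*θ := mul_le_mul_of_nonneg_right hwv hθ0.le
        have : Real.exp (-v*θ) ≤ Real.exp (-w*θ) := by
          apply Real.exp_le_exp.mpr
          rw [neg_mul, neg_mul]
          linarith
        linarith
      have hconst : ∫ _ in Set.Ioc b M, ((v - w) * (b * E2)) ∂π
          = (π (Set.Ioc b M)).toReal * ((v - w) * (b * E2)) := by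
        rw [setIntegral_const, smul_eq_mul]
        rfl
      have : (v - w) * c = (π (Set.Ioc b M)).toReal * ((v - w) * (b * E2)) := by
        simp only [hcdef]; ring
      linarith [hconst ▸ mono1, mono2]
    -- conclusion 1
    have hvwc : (v - w) * c ≤ (π (Set.Ioc r s)).toReal := by linarith
    have hFdiff : F s - F r = Real.exp (-(x*w)) - Real.exp (-(x*v)) := by
      rw [hF s, hF r, ← hwdef, ← hvdef, show -x*w = -(x*w) from by ring,
        show -x*v = -(x*v) from by ring]
    constructor
    · -- F s - F r ≤ (x/c) * toReal
      have h1 : Real.exp (-(w*x)) - Real.exp (-(v*x)) ≤ (v - w)*x := exp_ineq4 hw0 hwv hx.le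
      have h2 : F s - F r ≤ (v - w)*x := by
        rw [hFdiff, show -(x*w) = -(w*x) from by ring, show -(x*v) = -(v*x) from by ring]
        exact h1
      have h3 : v - w ≤ (π (Set.Ioc r s)).toReal / c := by
        rw [le_div_iff₀ hcpos]
        exact hvwc
      calc F s - F r ≤ (v - w)*x := h2
        _ ≤ ((π (Set.Ioc r s)).toReal / c) * x := mul_le_mul_of_nonneg_right h3 hx.le
        _ = (x / c) * (π (Set.Ioc r s)).toReal := by ring
    · -- toReal ≤ K₂ * (F s - F r)
      have hIub2 : I ≤ (v - w)*CG + (v - w)*Ca := by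
        rw [hstar]
        linarith
      have hee : Real.exp (va*b) * Real.exp (-(va*b)) = 1 := by
        rw [← Real.exp_add]; simp
      have h2a : (π (Set.Ioc r s)).toReal ≤ Real.exp (va*b) * ((v - w)*(CG + Ca)) := by
        calc (π (Set.Ioc r s)).toReal
            = Real.exp (va*b) * (Real.exp (-(va*b)) * (π (Set.Ioc r s)).toReal) := by
              rw [← mul_assoc, hee, one_mul]
          _ ≤ Real.exp (va*b) * I := mul_le_mul_of_nonneg_left hIlb (Real.exp_pos _).le
          _ ≤ Real.exp (va*b) * ((v - w)*(CG + Ca)) := by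
              apply mul_le_mul_of_nonneg_left ?_ (Real.exp_pos _).le
              calc I ≤ (v - w)*CG + (v - w)*Ca := hIub2
                _ = (v - w)*(CG + Ca) := by ring
      have h2b : (v - w) ≤ (F s - F r) / (x * Real.exp (-(x*va))) := by
        rw [le_div_iff₀ (by positivity)]
        have h5 := exp_ineq5 (w := w) (v := v) (x := x) hwv hx.le
        have hev : Real.exp (-(x*va)) ≤ Real.exp (-(x*v)) := by
          apply Real.exp_le_exp.mpr
          have : x*v ≤ x*va := mul_le_mul_of_nonneg_left hvva hx.le
          linarith
        have h6 : x * (v - w) * Real.exp (-(x*va)) ≤ x * (v - w) * Real.exp (-(x*v)) :=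
          mul_le_mul_of_nonneg_left hev (mul_nonneg hx.le (by linarith))
        rw [hFdiff]
        calc (v - w) * (x * Real.exp (-(x*va))) = x * (v - w) * Real.exp (-(x*va)) := by ring
          _ ≤ x * (v - w) * Real.exp (-(x*v)) := h6
          _ ≤ Real.exp (-(x*w)) - Real.exp (-(x*v)) := h5
      have hnn : (0:ℝ) ≤ Real.exp (va*b) * (CG + Ca) :=
        mul_nonneg (Real.exp_pos _).le (by linarith)
      calc (π (Set.Ioc r s)).toReal
          ≤ Real.exp (va*b) * ((v - w)*(CG + Ca)) := h2a
        _ = (Real.exp (va*b) * (CG + Ca)) * (v - w) := by ring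
        _ ≤ (Real.exp (va*b) * (CG + Ca)) * ((F s - F r) / (x * Real.exp (-(x*va)))) :=
            mul_le_mul_of_nonneg_left h2b hnn
        _ = Real.exp (va*b) * (CG + Ca) / (x * Real.exp (-(x*va))) * (F s - F r) := by
            ring

  -- null-set equivalence on compact subintervals
  have keyiff : ∀ G : StieltjesFunction ℝ, (∀ r : ℝ, 0 < r → G r = F r) →
      ∀ a b : ℝ, 0 < a → a < b → π (Set.Ioi b) ≠ 0 →
      ∀ A : Set ℝ, A ⊆ Set.Ioc a b → MeasurableSet A →
        (G.measure A = 0 ↔ π A = 0) := by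
    intro G hG a b ha hab hbne A hA hAm
    obtain ⟨K₁, K₂, hK₁, hK₂, hK⟩ := key a b ha hab hbne
    have hfina : π (Set.Ioi a) ≠ ⊤ := hfinm a ha
    have hIocfin : ∀ t : ℝ, π (Set.Ioc a t) ≠ ⊤ :=
      fun t => ((measure_mono Set.Ioc_subset_Ioi_self).trans_lt hfina.lt_top).ne
    set fW : ℝ → ℝ := fun t => (π (Set.Ioc a t)).toReal with hfWdef
    have hfWmono : Monotone fW := by
      intro t u htu
      exact ENNReal.toReal_mono (hIocfin u) (measure_mono (Set.Ioc_subset_Ioc_right htu))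
    -- additivity of fW
    have hπadd : ∀ r s : ℝ, a ≤ r → r ≤ s → fW s - fW r = (π (Set.Ioc r s)).toReal := by
      intro r s h1 h2
      have hdisj : Disjoint (Set.Ioc a r) (Set.Ioc r s) := Set.Ioc_disjoint_Ioc_of_le le_rfl
      have hsplit : π (Set.Ioc a s) = π (Set.Ioc a r) + π (Set.Ioc r s) := by
        rw [← Set.Ioc_union_Ioc_eq_Ioc h1 h2, measure_union hdisj measurableSet_Ioc]
      simp only [hfWdef]
      rw [hsplit, ENNReal.toReal_add (hIocfin r)
        (((measure_mono Set.Ioc_subset_Ioi_self).trans_lt (hfinm r (lt_of_lt_of_le ha h1)).lt_top).ne)]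
      ring
    -- right-continuity of fW
    have hfWrc : ∀ t : ℝ, a ≤ t → t < b → ContinuousWithinAt fW (Set.Ici t) t := by
      intro t hat htb
      set sq : ℕ → ℝ := fun n => t + 1/((n:ℝ)+1) with hsqdef
      have hsq : ∀ n, t < sq n := by
        intro n
        have : (0:ℝ) < 1/((n:ℝ)+1) := by positivity
        simp only [hsqdef]; linarith
      have hanti2 : Antitone (fun n => Set.Ioc a (sq n)) := by
        intro m n hmn
        apply Set.Ioc_subset_Ioc_right
        simp only [hsqdef]
        have h : 1/((n:ℝ)+1) ≤ 1/((m:ℝ)+1) := by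
          apply one_div_le_one_div_of_le (by positivity)
          have : (m:ℝ) ≤ (n:ℝ) := Nat.cast_le.mpr hmn
          linarith
        linarith
      have hiInt : (⋂ n, Set.Ioc a (sq n)) = Set.Ioc a t := by
        ext θ
        simp only [Set.mem_iInter, Set.mem_Ioc]
        constructor
        · intro h
          refine ⟨(h 0).1, ?_⟩
          by_contra hcon
          push_neg at hcon
          obtain ⟨n, hn⟩ := exists_nat_one_div_lt (show (0:ℝ) < θ - t by linarith)
          have := (h n).2
          simp only [hsqdef] at this
          have hcast : 1/((n:ℝ)+1) < θ - t := hn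
          linarith
        · intro h n
          exact ⟨h.1, h.2.trans (hsq n).le⟩
      have hmt : Tendsto (fun n => π (Set.Ioc a (sq n))) atTop (nhds (π (Set.Ioc a t))) := by
        have := tendsto_measure_iInter_atTop (μ := π) (s := fun n => Set.Ioc a (sq n))
          (fun n => measurableSet_Ioc.nullMeasurableSet) hanti2 ⟨0, hIocfin _⟩
        rw [hiInt] at this
        exact this
      have htoReal : Tendsto (fun n => fW (sq n)) atTop (nhds (fW t)) := by
        simp only [hfWdef]
        exact (ENNReal.tendsto_toReal (hIocfin t)).comp hmt
      exact mono_seq_cwa (hfWmono.monotoneOn _) hsq htoReal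
    -- the four Stieltjes functions
    have hFmonoIcc : MonotoneOn F (Set.Icc a b) :=
      conc1.mono (fun y hy => lt_of_lt_of_le ha hy.1)
    have hFrc : ∀ t, a ≤ t → t < b → ContinuousWithinAt F (Set.Ici t) t :=
      fun t h1 _ => conc2 t (lt_of_lt_of_le ha h1)
    obtain ⟨H, hH⟩ := exists_clamped_stieltjes F a b hab.le hFmonoIcc hFrc
    obtain ⟨W, hW⟩ := exists_clamped_stieltjes fW a b hab.le (hfWmono.monotoneOn _) hfWrc
    obtain ⟨HW, hHW⟩ := exists_clamped_stieltjes (fun t => K₁ * fW t) a b hab.le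
      (fun t ht u hu htu => mul_le_mul_of_nonneg_left (hfWmono htu) hK₁)
      (fun t h1 h2 => (continuousWithinAt_const).mul (hfWrc t h1 h2))
    obtain ⟨HF, hHF⟩ := exists_clamped_stieltjes (fun t => K₂ * F t) a b hab.le
      (fun t ht u hu htu => mul_le_mul_of_nonneg_left (hFmonoIcc ht hu htu) hK₂)
      (fun t h1 h2 => (continuousWithinAt_const).mul (hFrc t h1 h2))
    -- clamp facts
    have hclmem : ∀ t : ℝ, a ≤ max a (min t b) ∧ max a (min t b) ≤ b :=
      fun t => ⟨le_max_left _ _, max_le hab.le (min_le_right _ _)⟩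
    have hclid : ∀ t : ℝ, a ≤ t → t ≤ b → max a (min t b) = t := by
      intro t h1 h2
      rw [min_eq_left h2, max_eq_right h1]
    have hclmono : ∀ t u : ℝ, t ≤ u → max a (min t b) ≤ max a (min u b) :=
      fun t u htu => max_le_max le_rfl (min_le_min htu le_rfl)
    have hclpos : ∀ t : ℝ, 0 < max a (min t b) := fun t => lt_of_lt_of_le ha (le_max_left _ _)
    -- restriction evaluation helper
    have happly : ∀ μ : Measure ℝ, μ.restrict (Set.Ioc a b) A = μ A := by
      intro μ
      rw [Measure.restrict_apply hAm, Set.inter_eq_self_of_subset_left hA]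
    -- identification of G.measure and H.measure on A
    have hGA : G.measure A = H.measure A := by
      have hres := restrict_eq_of_Ioc (a := a) (b := b) G.measure H.measure
        (by rw [G.measure_Ioc]; exact ENNReal.ofReal_ne_top)
        (fun r s h1 h2 h3 => by
          rw [G.measure_Ioc, H.measure_Ioc, hH, hH, hclid s (h1.trans h2) h3, hclid r h1 (h2.trans h3),
            hG s (lt_of_lt_of_le ha (h1.trans h2)), hG r (lt_of_lt_of_le ha h1)])
      rw [← happly G.measure, ← happly H.measure, hres]
    -- identification of W.measure and π on A
    have hWA : W.measure A = π A := by
      have hres := restrict_eq_of_Ioc (a := a) (b := b) W.measure π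
        (by rw [W.measure_Ioc]; exact ENNReal.ofReal_ne_top)
        (fun r s h1 h2 h3 => by
          rw [W.measure_Ioc, hW, hW, hclid s (h1.trans h2) h3, hclid r h1 (h2.trans h3),
            hπadd r s h1 h2, ENNReal.ofReal_toReal
              (((measure_mono Set.Ioc_subset_Ioi_self).trans_lt (hfinm r (lt_of_lt_of_le ha h1)).lt_top).ne)])
      rw [← happly W.measure, ← happly π, hres]
    -- comparison: H.measure ≤ HW.measure
    have hHWle : H.measure ≤ HW.measure := by
      apply stieltjes_measure_le
      intro r s hrs
      rw [hH, hH, hHW, hHW]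
      set r' := max a (min r b)
      set s' := max a (min s b)
      have h1 : a ≤ r' := (hclmem r).1
      have h2 : r' ≤ s' := hclmono r s hrs
      have h3 : s' ≤ b := (hclmem s).2
      have := (hK r' s' h1 h2 h3).1
      rw [← hπadd r' s' h1 h2] at this
      linarith
    -- HW.measure = ofReal K₁ • π on A
    have hHWA : HW.measure A = ENNReal.ofReal K₁ * π A := by
      have hres := restrict_eq_of_Ioc (a := a) (b := b) HW.measure (ENNReal.ofReal K₁ • π)
        (by rw [HW.measure_Ioc]; exact ENNReal.ofReal_ne_top)
        (fun r s h1 h2 h3 => by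
          rw [HW.measure_Ioc, hHW, hHW, hclid s (h1.trans h2) h3, hclid r h1 (h2.trans h3),
            Measure.smul_apply, smul_eq_mul,
            show K₁ * fW s - K₁ * fW r = K₁ * (fW s - fW r) from by ring,
            ENNReal.ofReal_mul hK₁, hπadd r s h1 h2, ENNReal.ofReal_toReal
              (((measure_mono Set.Ioc_subset_Ioi_self).trans_lt (hfinm r (lt_of_lt_of_le ha h1)).lt_top).ne)])
      have := congrArg (fun μ : Measure ℝ => μ A) (hres)
      rw [happly HW.measure] at this
      rw [this, Measure.restrict_apply hAm, Set.inter_eq_self_of_subset_left hA,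
        Measure.smul_apply, smul_eq_mul]
    -- comparison: W.measure ≤ HF.measure
    have hWFle : W.measure ≤ HF.measure := by
      apply stieltjes_measure_le
      intro r s hrs
      rw [hW, hW, hHF, hHF]
      set r' := max a (min r b)
      set s' := max a (min s b)
      have h1 : a ≤ r' := (hclmem r).1
      have h2 : r' ≤ s' := hclmono r s hrs
      have h3 : s' ≤ b := (hclmem s).2
      have := (hK r' s' h1 h2 h3).2
      rw [← hπadd r' s' h1 h2] at this
      linarith
    -- HF.measure = ofReal K₂ • H.measure on A
    have hHFA : HF.measure A = ENNReal.ofReal K₂ * H.measure A := by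
      have hres := restrict_eq_of_Ioc (a := a) (b := b) HF.measure (ENNReal.ofReal K₂ • H.measure)
        (by rw [HF.measure_Ioc]; exact ENNReal.ofReal_ne_top)
        (fun r s h1 h2 h3 => by
          have hFle : F r ≤ F s := hFmonoIcc ⟨h1, h2.trans h3⟩ ⟨h1.trans h2, h3⟩ h2
          rw [HF.measure_Ioc, hHF, hHF, hclid s (h1.trans h2) h3, hclid r h1 (h2.trans h3),
            Measure.smul_apply, smul_eq_mul, H.measure_Ioc, hH, hH,
            hclid s (h1.trans h2) h3, hclid r h1 (h2.trans h3),
            show K₂ * F s - K₂ * F r = K₂ * (F s - F r) from by ring,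
            ENNReal.ofReal_mul hK₂])
      have := congrArg (fun μ : Measure ℝ => μ A) (hres)
      rw [happly HF.measure] at this
      rw [this, Measure.restrict_apply hAm, Set.inter_eq_self_of_subset_left hA,
        Measure.smul_apply, smul_eq_mul]
    constructor
    · intro hG0
      have h1 : π A ≤ ENNReal.ofReal K₂ * H.measure A := by
        rw [← hWA, ← hHFA]
        exact Measure.le_iff'.1 hWFle A
      rw [← hGA, hG0, mul_zero] at h1
      exact le_antisymm h1 zero_le
    · intro hπ0'
      have h1 : G.measure A ≤ ENNReal.ofReal K₁ * π A := by
        rw [hGA, ← hHWA]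
        exact Measure.le_iff'.1 hHWle A
      rw [hπ0', mul_zero] at h1
      exact le_antisymm h1 zero_le

  -- assembly
  have hPhimono := (Phi_strictMonoOn hα hβ hsupp hint hπ0).monotoneOn
  have main : ∀ G : StieltjesFunction ℝ, (∀ r : ℝ, 0 < r → G r = F r) →
      ∀ A : Set ℝ, A ⊆ Set.Ioi 0 → MeasurableSet A →
        (G.measure A = 0 ↔ π A = 0) := by
    intro G hG A hA hAm
    by_cases hP : ∀ b : ℝ, 0 < b → π (Set.Ioi b) ≠ 0
    · -- no vanishing tail: cover (0,∞) by intervals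
      set J : ℕ → Set ℝ := fun n => Set.Ioc (1/((n:ℝ)+1)) ((n:ℝ)+2) with hJdef
      have hcov : Set.Ioi 0 ⊆ ⋃ n, J n := by
        intro θ hθ
        simp only [Set.mem_Ioi] at hθ
        obtain ⟨n1, hn1⟩ := exists_nat_one_div_lt hθ
        obtain ⟨n2, hn2⟩ := exists_nat_ge θ
        refine Set.mem_iUnion.mpr ⟨max n1 n2, ?_⟩
        have hc1 : ((n1:ℝ)) ≤ ((max n1 n2 : ℕ):ℝ) := Nat.cast_le.mpr (le_max_left _ _)
        have hc2 : ((n2:ℝ)) ≤ ((max n1 n2 : ℕ):ℝ) := Nat.cast_le.mpr (le_max_right _ _)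
        constructor
        · have h : 1/(((max n1 n2 : ℕ):ℝ)+1) ≤ 1/((n1:ℝ)+1) :=
            one_div_le_one_div_of_le (by positivity) (by linarith)
          linarith
        · linarith
      have hiff : ∀ n : ℕ, (G.measure (A ∩ J n) = 0 ↔ π (A ∩ J n) = 0) := by
        intro n
        have ha : (0:ℝ) < 1/((n:ℝ)+1) := by positivity
        have hab : 1/((n:ℝ)+1) < (n:ℝ)+2 := by
          have h1 : 1/((n:ℝ)+1) ≤ 1 := by
            rw [div_le_one (by positivity)]
            have : (0:ℝ) ≤ (n:ℝ) := Nat.cast_nonneg n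
            linarith
          have : (0:ℝ) ≤ (n:ℝ) := Nat.cast_nonneg n
          linarith
        exact keyiff G hG _ _ ha hab (hP _ (by positivity)) (A ∩ J n)
          Set.inter_subset_right (hAm.inter measurableSet_Ioc)
      have hcomb : ∀ μ : Measure ℝ, μ A = 0 ↔ ∀ n, μ (A ∩ J n) = 0 := by
        intro μ
        constructor
        · intro h n
          exact measure_mono_null Set.inter_subset_left h
        · intro h
          have hAeq : A = ⋃ n, A ∩ J n := by
            rw [← Set.inter_iUnion]
            exact (Set.inter_eq_self_of_subset_left (hA.trans hcov)).symm
          rw [hAeq]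
          exact measure_iUnion_null h
      rw [hcomb G.measure, hcomb π]
      exact forall_congr' hiff
    · -- there is a vanishing tail
      push_neg at hP
      obtain ⟨b0, hb00, hb0⟩ := hP
      set P : Set ℝ := {t : ℝ | 0 < t ∧ π (Set.Ioi t) = 0} with hPdef
      have hPne : P.Nonempty := ⟨b0, hb00, hb0⟩
      have hPbdd : BddBelow P := ⟨0, fun t ht => ht.1.le⟩
      set rs := sInf P with hrsdef
      have hrs0 : 0 ≤ rs := le_csInf hPne (fun t ht => ht.1.le)
      have htail : ∀ r : ℝ, rs < r → π (Set.Ioi r) = 0 := by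
        intro r hr
        obtain ⟨p, hp, hpr⟩ := (csInf_lt_iff hPbdd hPne).mp hr
        exact measure_mono_null (Set.Ioi_subset_Ioi hpr.le) hp.2
      have hstar : π (Set.Ioi rs) = 0 := by
        have hcover : Set.Ioi rs = ⋃ n : ℕ, Set.Ioi (rs + 1/((n:ℝ)+1)) := by
          ext θ
          simp only [Set.mem_Ioi, Set.mem_iUnion]
          constructor
          · intro h
            obtain ⟨n, hn⟩ := exists_nat_one_div_lt (show (0:ℝ) < θ - rs by linarith)
            exact ⟨n, by linarith⟩
          · rintro ⟨n, hn⟩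
            have : (0:ℝ) < 1/((n:ℝ)+1) := by positivity
            linarith
        rw [hcover]
        refine measure_iUnion_null fun n => htail _ ?_
        have : (0:ℝ) < 1/((n:ℝ)+1) := by positivity
        linarith
      have hrspos : 0 < rs := by
        rcases (hrs0.eq_or_lt.imp Eq.symm id) with h0 | h0
        · exfalso
          rw [h0] at hstar
          exact absurd hstar hπ0.ne'
        · exact h0
      have hpre : ∀ t : ℝ, 0 < t → t < rs → π (Set.Ioi t) ≠ 0 := by
        intro t ht htrs hcon
        have hmem : t ∈ P := ⟨ht, hcon⟩
        have := csInf_le hPbdd hmem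
        linarith
      have hFone : ∀ r : ℝ, rs ≤ r → F r = 1 := by
        intro r hr
        have hr0 : 0 < r := lt_of_lt_of_le hrspos hr
        have h0 : π (Set.Ioi r) = 0 := measure_mono_null (Set.Ioi_subset_Ioi hr) hstar
        rw [hF r, hzero r hr0 h0, mul_zero, Real.exp_zero]
      have hGtail : G.measure (Set.Ioi rs) = 0 := by
        have hcover : Set.Ioi rs = ⋃ n : ℕ, Set.Ioc rs (rs + ((n:ℝ)+1)) := by
          ext θ
          simp only [Set.mem_Ioi, Set.mem_iUnion, Set.mem_Ioc]
          constructor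
          · intro h
            obtain ⟨n, hn⟩ := exists_nat_ge (θ - rs)
            exact ⟨n, h, by linarith⟩
          · rintro ⟨n, h1, _⟩; exact h1
        rw [hcover]
        refine measure_iUnion_null fun n => ?_
        have h1 : (0:ℝ) < rs + ((n:ℝ)+1) := by
          have : (0:ℝ) ≤ (n:ℝ) := Nat.cast_nonneg n
          linarith
        rw [G.measure_Ioc, hG _ hrspos, hG _ h1, hFone rs le_rfl,
          hFone _ (by have : (0:ℝ) ≤ (n:ℝ) := Nat.cast_nonneg n; linarith), sub_self,
          ENNReal.ofReal_zero]
      -- increasing sequence approaching rs from the left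
      set tq : ℕ → ℝ := fun n => rs - rs/((n:ℝ)+2) with htqdef
      have htqlt : ∀ n : ℕ, (0:ℝ) < rs/((n:ℝ)+2) := fun n => div_pos hrspos (by positivity)
      have htq2 : ∀ n, tq n < rs := by
        intro n
        have := htqlt n
        simp only [htqdef]
        linarith
      have htq1 : ∀ n, 0 < tq n := by
        intro n
        have hd : rs/((n:ℝ)+2) < rs := by
          apply div_lt_self hrspos
          have : (0:ℝ) ≤ (n:ℝ) := Nat.cast_nonneg n
          linarith
        simp only [htqdef]
        linarith
      have htqmono : Monotone tq := by
        intro m n hmn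
        simp only [htqdef]
        have h : rs/((n:ℝ)+2) ≤ rs/((m:ℝ)+2) := by
          apply div_le_div_of_nonneg_left hrs0 (by positivity)
          have : (m:ℝ) ≤ (n:ℝ) := Nat.cast_le.mpr hmn
          linarith
        linarith
      have htqt : Tendsto tq atTop (nhds rs) := by
        have hsq : Tendsto (fun n : ℕ => ((n:ℝ)+2)) atTop atTop :=
          tendsto_atTop_add_const_right _ 2 tendsto_natCast_atTop_atTop
        have h2 : Tendsto (fun n : ℕ => rs/((n:ℝ)+2)) atTop (nhds 0) :=
          Tendsto.div_atTop tendsto_const_nhds hsq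
        have h3 := (tendsto_const_nhds (x := rs) (f := atTop (α := ℕ))).sub h2
        rw [sub_zero] at h3
        exact h3
      set u : ℕ → ℝ := fun n => inv (tq n) with hudef
      have hu0 : ∀ n, 0 ≤ u n := fun n => hinv0 _ (htq1 n)
      have huanti : Antitone u := fun m n hmn => hanti (tq m) (tq n) (htq1 m) (htqmono hmn)
      have hubdd : BddBelow (Set.range u) := ⟨0, by rintro _ ⟨n, rfl⟩; exact hu0 n⟩
      set L := ⨅ n, u n with hLdef
      have hLt : Tendsto u atTop (nhds L) := tendsto_atTop_ciInf huanti hubdd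
      have hL0 : 0 ≤ L := le_ciInf hu0
      have hLle : ∀ n, L ≤ u n := fun n => ciInf_le hubdd n
      have huV : ∀ n, u n ≤ u 0 := fun n => huanti (Nat.zero_le n)
      -- the tail measures tend to π {rs}
      have hIcieq : (⋂ n, Set.Ioi (tq n)) = Set.Ici rs := by
        ext θ
        simp only [Set.mem_iInter, Set.mem_Ioi, Set.mem_Ici]
        constructor
        · intro h
          by_contra hc
          push_neg at hc
          obtain ⟨n, hn⟩ := exists_nat_one_div_lt
            (show (0:ℝ) < (rs - θ)/rs from div_pos (by linarith) hrspos)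
          have h2 : 1/((n:ℝ)+2) ≤ 1/((n:ℝ)+1) := by
            apply one_div_le_one_div_of_le (by positivity)
            linarith
          have h3 : rs/((n:ℝ)+2) = rs * (1/((n:ℝ)+2)) := by ring
          have h4 : rs * (1/((n:ℝ)+2)) ≤ rs * (1/((n:ℝ)+1)) :=
            mul_le_mul_of_nonneg_left h2 hrs0
          have h5 : rs * (1/((n:ℝ)+1)) < rs * ((rs - θ)/rs) :=
            mul_lt_mul_of_pos_left hn hrspos
          have h6 : rs * ((rs - θ)/rs) = rs - θ := by
            field_simp
          have h7 := h n
          simp only [htqdef] at h7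
          linarith
        · intro h n
          exact lt_of_lt_of_le (htq2 n) h
      have hmt : Tendsto (fun n => π (Set.Ioi (tq n))) atTop (nhds (π (Set.Ici rs))) := by
        have := tendsto_measure_iInter_atTop (μ := π) (s := fun n => Set.Ioi (tq n))
          (fun n => measurableSet_Ioi.nullMeasurableSet)
          (fun m n hmn => Set.Ioi_subset_Ioi (htqmono hmn))
          ⟨0, hfinm _ (htq1 0)⟩
        rw [hIcieq] at this
        exact this
      have hIci : π (Set.Ici rs) = π {rs} := by
        apply le_antisymm
        · have hsub : Set.Ici rs ⊆ {rs} ∪ Set.Ioi rs := by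
            intro y hy
            rcases eq_or_lt_of_le (Set.mem_Ici.mp hy) with h | h
            · exact Or.inl (by simp [← h])
            · exact Or.inr h
          calc π (Set.Ici rs) ≤ π ({rs} ∪ Set.Ioi rs) := measure_mono hsub
            _ ≤ π {rs} + π (Set.Ioi rs) := measure_union_le _ _
            _ = π {rs} := by rw [hstar, add_zero]
        · exact measure_mono (Set.singleton_subset_iff.mpr Set.self_mem_Ici)
      have hsingfin : π {rs} ≠ ⊤ :=
        ((measure_mono (Set.singleton_subset_iff.mpr (htq2 0))).trans_lt
          (hfinm _ (htq1 0)).lt_top).ne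
      -- singleton dichotomy
      have hsingGzero : π {rs} = 0 → G.measure {rs} = 0 := by
        intro hs0
        have hLzero : L = 0 := by
          have hle : ∀ n, Phi α β π L ≤ (π (Set.Ioi (tq n))).toReal := by
            intro n
            have h1 : Phi α β π L ≤ Phi α β π (u n) :=
              hPhimono (Set.mem_Ici.mpr hL0) (Set.mem_Ici.mpr (hu0 n)) (hLle n)
            have h2 := heq _ (htq1 n)
            have h3 : Tint π (tq n) (u n) ≤ (π (Set.Ioi (tq n))).toReal :=
              Tint_le_measure (hfinm _ (htq1 n)) (hu0 n) (htq1 n)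
            simp only [hudef] at h1 ⊢
            linarith
          have h0 : π (Set.Ici rs) = 0 := by rw [hIci, hs0]
          have hlim : Tendsto (fun n => (π (Set.Ioi (tq n))).toReal) atTop (nhds 0) := by
            have h1 := (ENNReal.tendsto_toReal (by rw [h0]; exact ENNReal.zero_ne_top)).comp hmt
            rw [h0] at h1
            exact h1
          have h2 : Phi α β π L ≤ 0 := ge_of_tendsto' hlim hle
          have h3 : 0 ≤ Phi α β π L := by
            have := hPhimono (Set.mem_Ici.mpr le_rfl) (Set.mem_Ici.mpr hL0) hL0
            rw [Phi_zero] at this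
            exact this
          by_contra hc
          have hLpos : 0 < L := lt_of_le_of_ne hL0 (Ne.symm hc)
          have := Phi_strictMonoOn hα hβ hsupp hint hπ0 (Set.mem_Ici.mpr le_rfl)
            (Set.mem_Ici.mpr hL0) hLpos
          rw [Phi_zero] at this
          linarith
        have hb : ∀ n, G.measure {rs} ≤ ENNReal.ofReal (1 - Real.exp (-x * u n)) := by
          intro n
          have hsub : ({rs} : Set ℝ) ⊆ Set.Ioc (tq n) rs :=
            Set.singleton_subset_iff.mpr ⟨htq2 n, le_rfl⟩
          calc G.measure {rs} ≤ G.measure (Set.Ioc (tq n) rs) := measure_mono hsub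
            _ = ENNReal.ofReal (G rs - G (tq n)) := G.measure_Ioc _ _
            _ = ENNReal.ofReal (1 - Real.exp (-x * u n)) := by
                rw [hG rs hrspos, hG _ (htq1 n), hFone rs le_rfl, hF (tq n)]
        have hblim : Tendsto (fun n => ENNReal.ofReal (1 - Real.exp (-x * u n)))
            atTop (nhds 0) := by
          have h1 : Tendsto (fun n => 1 - Real.exp (-x * u n)) atTop
              (nhds (1 - Real.exp (-x * L))) :=
            tendsto_const_nhds.sub ((Real.continuous_exp.tendsto _).comp (hLt.const_mul (-x)))
          rw [hLzero] at h1
          simp only [mul_zero, Real.exp_zero, sub_self] at h1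
          have := ENNReal.tendsto_ofReal h1
          simpa using this
        exact le_antisymm (ge_of_tendsto' hblim hb) zero_le
      have hsingGpos : π {rs} ≠ 0 → G.measure {rs} ≠ 0 := by
        intro hs0
        have hc0 : 0 < Real.exp (-(u 0) * rs) * (π {rs}).toReal :=
          mul_pos (Real.exp_pos _) (ENNReal.toReal_pos hs0 hsingfin)
        have hsingfin2 : π ({rs} : Set ℝ) < ⊤ := hsingfin.lt_top
        have hlb : ∀ n, Real.exp (-(u 0) * rs) * (π {rs}).toReal ≤ Phi α β π (u n) := by
          intro n
          rw [show Phi α β π (u n) = Tint π (tq n) (u n) from heq _ (htq1 n)]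
          have hIn : IntegrableOn (fun θ => Real.exp (-(u n) * θ)) (Set.Ioi (tq n)) π :=
            integrableOn_exp (hfinm _ (htq1 n)) (htq1 n) (hu0 n)
          have hsub : ({rs} : Set ℝ) ⊆ Set.Ioi (tq n) :=
            Set.singleton_subset_iff.mpr (htq2 n)
          have h1 : ∫ θ in ({rs} : Set ℝ), Real.exp (-(u n) * θ) ∂π ≤ Tint π (tq n) (u n) := by
            apply setIntegral_mono_set hIn
            · filter_upwards with θ using (Real.exp_pos _).le
            · exact hsub.eventuallyLE
          have h2 : ∫ _ in ({rs} : Set ℝ), Real.exp (-(u 0) * rs) ∂π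
              ≤ ∫ θ in ({rs} : Set ℝ), Real.exp (-(u n) * θ) ∂π := by
            refine integral_mono_ae (integrableOn_const hsingfin2.ne)
              (hIn.mono_set hsub) ?_
            filter_upwards [ae_restrict_mem (measurableSet_singleton rs)] with θ hθ
            rw [Set.mem_singleton_iff] at hθ
            rw [hθ]
            apply Real.exp_le_exp.mpr
            have h3 : u n * rs ≤ u 0 * rs := mul_le_mul_of_nonneg_right (huV n) hrs0
            rw [neg_mul, neg_mul]
            linarith
          have h3 : ∫ _ in ({rs} : Set ℝ), Real.exp (-(u 0) * rs) ∂π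
              = (π {rs}).toReal * Real.exp (-(u 0) * rs) := by
            rw [setIntegral_const, smul_eq_mul]
            rfl
          rw [h3] at h2
          calc Real.exp (-(u 0) * rs) * (π {rs}).toReal
              = (π {rs}).toReal * Real.exp (-(u 0) * rs) := by ring
            _ ≤ ∫ θ in ({rs} : Set ℝ), Real.exp (-(u n) * θ) ∂π := h2
            _ ≤ Tint π (tq n) (u n) := h1
        have hLpos : 0 < L := by
          by_contra hc
          push_neg at hc
          have hLzero : L = 0 := le_antisymm hc hL0
          have htP : Tendsto (fun n => Phi α β π (u n)) atTop (nhds (Phi α β π L)) :=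
            tendsto_Phi hsupp hint hu0 huV hLt
          have := ge_of_tendsto' htP hlb
          rw [hLzero, Phi_zero] at this
          linarith
        -- left limit of G at rs
        have hll : Function.leftLim (⇑G) rs = Real.exp (-x * L) := by
          have h1 : Tendsto (⇑G) (nhdsWithin rs (Set.Iio rs)) (nhds (Function.leftLim (⇑G) rs)) :=
            G.mono.tendsto_leftLim rs
          have h2 : Tendsto tq atTop (nhdsWithin rs (Set.Iio rs)) := by
            apply tendsto_nhdsWithin_of_tendsto_nhds_of_eventually_within _ htqt
            filter_upwards with n
            exact htq2 n
          have h3 : Tendsto (fun n => G (tq n)) atTop (nhds (Function.leftLim (⇑G) rs)) :=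
            h1.comp h2
          have h4 : Tendsto (fun n => G (tq n)) atTop (nhds (Real.exp (-x * L))) := by
            have he : (fun n => G (tq n)) = fun n => Real.exp (-x * u n) :=
              funext fun n => by rw [hG _ (htq1 n), hF]
            rw [he]
            exact (Real.continuous_exp.tendsto _).comp (hLt.const_mul (-x))
          exact tendsto_nhds_unique h3 h4
        intro hcontra
        rw [G.measure_singleton, hll, hG rs hrspos, hFone rs le_rfl] at hcontra
        rw [ENNReal.ofReal_eq_zero] at hcontra
        have hlt : Real.exp (-x * L) < 1 := by
          have h := Real.exp_lt_exp.mpr (show -x * L < 0 by nlinarith)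
          rwa [Real.exp_zero] at h
        linarith
      -- middle covering intervals
      set Jm : ℕ → Set ℝ := fun n => Set.Ioc (rs/((n:ℝ)+3)) (rs - rs/((n:ℝ)+3)) with hJmdef
      have hJma : ∀ n : ℕ, (0:ℝ) < rs/((n:ℝ)+3) := fun n => by positivity
      have hJmab : ∀ n : ℕ, rs/((n:ℝ)+3) < rs - rs/((n:ℝ)+3) := by
        intro n
        have h1 : rs/((n:ℝ)+3) ≤ rs/(3:ℝ) := by
          apply div_le_div_of_nonneg_left hrs0 (by norm_num)
          have : (0:ℝ) ≤ (n:ℝ) := Nat.cast_nonneg n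
          linarith
        have h2 : (0:ℝ) < rs/(3:ℝ) := by positivity
        linarith [show rs/(3:ℝ) + rs/(3:ℝ) + rs/(3:ℝ) = rs from by ring]
      have hJmb : ∀ n : ℕ, rs - rs/((n:ℝ)+3) < rs := fun n => by linarith [hJma n]
      have hJmb0 : ∀ n : ℕ, (0:ℝ) < rs - rs/((n:ℝ)+3) := fun n => lt_trans (hJma n) (hJmab n)
      have hJmiff : ∀ n, (G.measure (A ∩ Set.Ioo 0 rs ∩ Jm n) = 0 ↔ π (A ∩ Set.Ioo 0 rs ∩ Jm n) = 0) := by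
        intro n
        exact keyiff G hG _ _ (hJma n) (hJmab n)
          (hpre _ (hJmb0 n) (hJmb n)) _ Set.inter_subset_right
          ((hAm.inter measurableSet_Ioo).inter measurableSet_Ioc)
      have hJmcov : Set.Ioo 0 rs ⊆ ⋃ n, Jm n := by
        intro θ hθ
        obtain ⟨hθ0, hθrs⟩ := hθ
        set ε := min θ (rs - θ) with hεdef
        have hε0 : 0 < ε := lt_min hθ0 (by linarith)
        obtain ⟨n, hn⟩ := exists_nat_one_div_lt (show (0:ℝ) < ε/rs by positivity)
        refine Set.mem_iUnion.mpr ⟨n, ?_⟩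
        have h2 : 1/((n:ℝ)+3) ≤ 1/((n:ℝ)+1) :=
          one_div_le_one_div_of_le (by positivity) (by linarith)
        have h3 : rs/((n:ℝ)+3) = rs * (1/((n:ℝ)+3)) := by ring
        have h4 : rs * (1/((n:ℝ)+3)) ≤ rs * (1/((n:ℝ)+1)) :=
          mul_le_mul_of_nonneg_left h2 hrs0
        have h5 : rs * (1/((n:ℝ)+1)) < rs * (ε/rs) := mul_lt_mul_of_pos_left hn hrspos
        have h6 : rs * (ε/rs) = ε := by field_simp
        have h7 : rs/((n:ℝ)+3) < ε := by linarith
        have h8 : ε ≤ θ := min_le_left _ _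
        have h9 : ε ≤ rs - θ := min_le_right _ _
        exact ⟨by linarith, by linarith⟩
      -- decomposition
      have hdecomp : ∀ μ : Measure ℝ, μ A = 0 ↔
          ((∀ n, μ (A ∩ Set.Ioo 0 rs ∩ Jm n) = 0) ∧ μ (A ∩ {rs}) = 0 ∧ μ (A ∩ Set.Ioi rs) = 0) := by
        intro μ
        constructor
        · intro h
          exact ⟨fun n => measure_mono_null (Set.inter_subset_left.trans Set.inter_subset_left) h,
            measure_mono_null Set.inter_subset_left h,
            measure_mono_null Set.inter_subset_left h⟩
        · rintro ⟨h1, h2, h3⟩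
          have hAsub : A ⊆ (⋃ n, A ∩ Set.Ioo 0 rs ∩ Jm n) ∪ (A ∩ {rs}) ∪ (A ∩ Set.Ioi rs) := by
            intro y hy
            have hy0 : 0 < y := hA hy
            rcases lt_trichotomy y rs with hlt | heq' | hgt
            · obtain ⟨n, hn⟩ := Set.mem_iUnion.mp (hJmcov ⟨hy0, hlt⟩)
              exact Or.inl (Or.inl (Set.mem_iUnion.mpr ⟨n, ⟨hy, ⟨hy0, hlt⟩⟩, hn⟩))
            · exact Or.inl (Or.inr ⟨hy, by simp [heq']⟩)
            · exact Or.inr ⟨hy, hgt⟩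
          refine measure_mono_null hAsub ?_
          exact measure_union_null (measure_union_null (measure_iUnion_null h1) h2) h3
      have hsingiff : (G.measure (A ∩ {rs}) = 0 ↔ π (A ∩ {rs}) = 0) := by
        by_cases hrsA : rs ∈ A
        · have he : A ∩ {rs} = {rs} :=
            Set.inter_eq_self_of_subset_right (Set.singleton_subset_iff.mpr hrsA)
          rw [he]
          constructor
          · intro h
            by_contra hc
            exact (hsingGpos hc) h
          · intro h
            exact hsingGzero h
        · have he : A ∩ {rs} = ∅ := by
            ext y
            simp only [Set.mem_inter_iff, Set.mem_singleton_iff, Set.mem_empty_iff_false,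
              iff_false, not_and]
            intro hyA hyrs
            exact hrsA (hyrs ▸ hyA)
          rw [he]
          simp
      rw [hdecomp G.measure, hdecomp π]
      constructor
      · rintro ⟨h1, h2, h3⟩
        exact ⟨fun n => (hJmiff n).mp (h1 n), hsingiff.mp h2,
          measure_mono_null Set.inter_subset_right hstar⟩
      · rintro ⟨h1, h2, h3⟩
        exact ⟨fun n => (hJmiff n).mpr (h1 n), hsingiff.mpr h2,
          measure_mono_null Set.inter_subset_right hGtail⟩

  exact ⟨conc1, conc2, conc3, main⟩
end

section
/- (Analytic bound underlying Corollary 3.13.) Let Φ be a branching mechanism with drift parameter α ∈ ℝ, let λ ≥ 0, and let u_t(λ) be the unique locally bounded nonnegative solution of u_t = λt − ∫₀ᵗ Φ(u_s) ds. Then for all t ≥ 0, 0 ≤ λ − Φ(u_t(λ)) ≤ λ e^{−αt}. Consequently, for every x > 0, the function g(t) = x (λ − Φ(u_t(λ))) exp(−x u_t(λ)) satisfies g(t) ≤ x λ e^{−αt} for all t ≥ 0. -/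
open MeasureTheory Filter Set Topology

/-- `u` is a locally bounded nonnegative solution of `u_t = λt - ∫₀ᵗ Φ(u_s) ds`. -/
def IsMassSolution (Φ : ℝ → ℝ) (lam : ℝ) (u : ℝ → ℝ) : Prop :=
  (∀ t, 0 ≤ t → 0 ≤ u t) ∧
  (∀ T, 0 < T → BddAbove (u '' Set.Icc 0 T)) ∧
  (∀ t, 0 ≤ t → u t = lam * t - ∫ s in (0:ℝ)..t, Φ (u s))

namespace FJDB

lemma nker_nonneg (l θ : ℝ) : 0 ≤ Real.exp (-l * θ) - 1 + l * θ := by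
  have := Real.add_one_le_exp (-l * θ)
  linarith

lemma nker_le_linear {l θ : ℝ} (hl : 0 ≤ l) (hθ : 0 ≤ θ) :
    Real.exp (-l * θ) - 1 + l * θ ≤ l * θ := by
  have : Real.exp (-l * θ) ≤ 1 := Real.exp_le_one_iff.2 (by nlinarith)
  linarith

lemma nker_le_sq {l θ : ℝ} (hl : 0 ≤ l) (hθ : 0 ≤ θ) :
    Real.exp (-l * θ) - 1 + l * θ ≤ l ^ 2 * θ ^ 2 / 2 := by
  have h1 : 1 + l * θ + (l * θ) ^ 2 / 2 ≤ Real.exp (l * θ) :=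
    Real.quadratic_le_exp_of_nonneg (by positivity)
  have h2 : Real.exp (-l * θ) * Real.exp (l * θ) = 1 := by
    rw [← Real.exp_add]; norm_num
  have h3 : (0:ℝ) < Real.exp (l * θ) := Real.exp_pos _
  have h4 : (0:ℝ) < 1 + l * θ + (l * θ) ^ 2 / 2 := by positivity
  have h5 : Real.exp (-l * θ) ≤ 1 / (1 + l * θ + (l * θ) ^ 2 / 2) := by
    rw [le_div_iff₀ h4]
    calc Real.exp (-l * θ) * (1 + l * θ + (l * θ) ^ 2 / 2)
        ≤ Real.exp (-l * θ) * Real.exp (l * θ) := by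
          apply mul_le_mul_of_nonneg_left h1 (Real.exp_pos _).le
      _ = 1 := h2
  have h6 : 1 / (1 + l * θ + (l * θ) ^ 2 / 2) ≤ 1 - l * θ + (l * θ) ^ 2 / 2 := by
    rw [div_le_iff₀ h4]; nlinarith [sq_nonneg (l * θ), sq_nonneg ((l*θ)^2)]
  nlinarith

lemma nker_mono {v w θ : ℝ} (hv : 0 ≤ v) (hvw : v ≤ w) (hθ : 0 ≤ θ) :
    Real.exp (-v * θ) - 1 + v * θ ≤ Real.exp (-w * θ) - 1 + w * θ := by
  have h1 : Real.exp (-v * θ) ≤ 1 := Real.exp_le_one_iff.2 (by nlinarith)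
  have h2 : 1 - (w - v) * θ ≤ Real.exp (-((w - v) * θ)) := by
    have := Real.add_one_le_exp (-((w - v) * θ)); linarith
  have h3 : Real.exp (-w * θ) = Real.exp (-v * θ) * Real.exp (-((w - v) * θ)) := by
    rw [← Real.exp_add]; ring_nf
  have h4 : (0:ℝ) < Real.exp (-v * θ) := Real.exp_pos _
  have e1 : Real.exp (-v * θ) * (1 - (w - v) * θ) ≤ Real.exp (-w * θ) := by
    rw [h3]; exact mul_le_mul_of_nonneg_left h2 h4.le
  have e2 : 0 ≤ (1 - Real.exp (-v * θ)) * ((w - v) * θ) :=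
    mul_nonneg (by linarith) (mul_nonneg (by linarith) hθ)
  nlinarith [e1, e2]

lemma nker_convex {w θ t : ℝ} (ht : 0 ≤ t) (ht1 : t ≤ 1) :
    Real.exp (-(t * w) * θ) - 1 + (t * w) * θ ≤ t * (Real.exp (-w * θ) - 1 + w * θ) := by
  have h := convexOn_exp.2 (mem_univ (-w * θ)) (mem_univ (0:ℝ)) ht
    (show (0:ℝ) ≤ 1 - t by linarith) (by ring)
  simp only [smul_eq_mul, mul_zero, add_zero, Real.exp_zero, mul_one] at h
  have : -(t * w) * θ = t * (-w * θ) := by ring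
  rw [this]
  linarith [h]

lemma nker_bound {l L θ : ℝ} (hl : 0 ≤ l) (hL : l ≤ L) (hθ : 0 < θ) :
    Real.exp (-l * θ) - 1 + l * θ ≤ max L (L ^ 2) * min θ (θ ^ 2) := by
  rcases le_total θ 1 with h1 | h1
  · have hmin : min θ (θ ^ 2) = θ ^ 2 := min_eq_right (by nlinarith)
    rw [hmin]
    calc Real.exp (-l * θ) - 1 + l * θ ≤ l ^ 2 * θ ^ 2 / 2 := nker_le_sq hl hθ.le
      _ ≤ max L (L ^ 2) * θ ^ 2 := by
          have : l ^ 2 ≤ L ^ 2 := by nlinarith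
          nlinarith [le_max_right L (L ^ 2), sq_nonneg θ]
  · have hmin : min θ (θ ^ 2) = θ := min_eq_left (by nlinarith)
    rw [hmin]
    calc Real.exp (-l * θ) - 1 + l * θ ≤ l * θ := nker_le_linear hl hθ.le
      _ ≤ max L (L ^ 2) * θ := by nlinarith [le_max_left L (L ^ 2)]

variable {α β : ℝ} {π : Measure ℝ}

lemma ae_pos (hsupp : π (Set.Iic 0) = 0) : ∀ᵐ θ ∂π, 0 < θ := by
  rw [ae_iff]
  convert hsupp using 2
  ext θ; simp [not_lt]

lemma nker_continuous (θ : ℝ) : Continuous (fun l : ℝ => Real.exp (-l * θ) - 1 + l * θ) := by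
  continuity

lemma nker_measurable (l : ℝ) :
    AEStronglyMeasurable (fun θ : ℝ => Real.exp (-l * θ) - 1 + l * θ) π :=
  (Continuous.aestronglyMeasurable (by continuity))

lemma integrable_nker (hsupp : π (Set.Iic 0) = 0)
    (hint : Integrable (fun θ => min θ (θ ^ 2)) π) {l : ℝ} (hl : 0 ≤ l) :
    Integrable (fun θ => Real.exp (-l * θ) - 1 + l * θ) π := by
  refine Integrable.mono' (hint.const_mul (max l (l ^ 2))) (nker_measurable l) ?_
  filter_upwards [ae_pos hsupp] with θ hθ
  rw [Real.norm_eq_abs, abs_of_nonneg (nker_nonneg l θ)]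
  exact nker_bound hl le_rfl hθ

lemma phi_zero : Phi α β π 0 = 0 := by
  simp [Phi]

lemma phi_increment_lower (hβ : 0 ≤ β) (hsupp : π (Set.Iic 0) = 0)
    (hint : Integrable (fun θ => min θ (θ ^ 2)) π)
    {v w : ℝ} (hv : 0 ≤ v) (hvw : v ≤ w) :
    α * (w - v) ≤ Phi α β π w - Phi α β π v := by
  have hw : 0 ≤ w := hv.trans hvw
  have hI : (∫ θ, (Real.exp (-v * θ) - 1 + v * θ) ∂π) ≤
      ∫ θ, (Real.exp (-w * θ) - 1 + w * θ) ∂π := by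
    refine integral_mono_ae (integrable_nker hsupp hint hv) (integrable_nker hsupp hint hw) ?_
    filter_upwards [ae_pos hsupp] with θ hθ
    exact nker_mono hv hvw hθ.le
  have hsq : β * v ^ 2 ≤ β * w ^ 2 := mul_le_mul_of_nonneg_left (by nlinarith) hβ
  simp only [Phi]; nlinarith

lemma phi_le_max (hβ : 0 ≤ β) (hsupp : π (Set.Iic 0) = 0)
    (hint : Integrable (fun θ => min θ (θ ^ 2)) π)
    {v w : ℝ} (hv : 0 ≤ v) (hvw : v ≤ w) :
    Phi α β π v ≤ max 0 (Phi α β π w) := by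
  rcases eq_or_lt_of_le (hv.trans hvw) with hw0 | hw0
  · have hv0 : v = 0 := le_antisymm (hvw.trans hw0.symm.le) hv
    rw [hv0, phi_zero]; exact le_max_left _ _
  · set t : ℝ := v / w with hT
    have ht : 0 ≤ t := div_nonneg hv hw0.le
    have ht1 : t ≤ 1 := (div_le_one hw0).2 hvw
    have hvt : v = t * w := by rw [hT, div_mul_cancel₀ _ hw0.ne']
    have key : Phi α β π v ≤ t * Phi α β π w := by
      have hI : (∫ θ, (Real.exp (-v * θ) - 1 + v * θ) ∂π) ≤
          t * ∫ θ, (Real.exp (-w * θ) - 1 + w * θ) ∂π := by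
        rw [← integral_const_mul]
        refine integral_mono_ae (integrable_nker hsupp hint hv)
          ((integrable_nker hsupp hint hw0.le).const_mul t) ?_
        filter_upwards with θ
        rw [hvt]
        exact nker_convex ht ht1
      have hsq : β * v ^ 2 ≤ t * (β * w ^ 2) := by
        rw [hvt]; nlinarith [mul_nonneg (mul_nonneg ht (sub_nonneg.2 ht1)) (sq_nonneg w)]
      have hlin : α * v = t * (α * w) := by rw [hvt]; ring
      simp only [Phi]; linarith
    rcases le_total (Phi α β π w) 0 with h | h
    · have : t * Phi α β π w ≤ 0 := mul_nonpos_of_nonneg_of_nonpos ht h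
      exact key.trans (this.trans (le_max_left _ _))
    · have : t * Phi α β π w ≤ Phi α β π w := by nlinarith
      exact key.trans (this.trans (le_max_right _ _))

lemma phi_continuousOn (hsupp : π (Set.Iic 0) = 0)
    (hint : Integrable (fun θ => min θ (θ ^ 2)) π) :
    ContinuousOn (Phi α β π) (Ici 0) := by
  have h1 : ContinuousOn (fun l : ℝ => α * l + β * l ^ 2) (Ici 0) := by fun_prop
  have h2 : ContinuousOn
      (fun l : ℝ => ∫ θ, (Real.exp (-l * θ) - 1 + l * θ) ∂π) (Ici 0) := by
    intro x₀ hx₀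
    refine continuousWithinAt_of_dominated
      (F := fun l θ => Real.exp (-l * θ) - 1 + l * θ)
      (bound := fun θ => max (x₀ + 1) ((x₀ + 1) ^ 2) * min θ (θ ^ 2)) ?_ ?_
      (hint.const_mul _) ?_
    · filter_upwards with l using nker_measurable l
    · have hev : ∀ᶠ l in 𝓝[Ici 0] x₀, l ∈ Ici 0 ∩ Iio (x₀ + 1) := by
        refine Filter.inter_mem self_mem_nhdsWithin ?_
        exact nhdsWithin_le_nhds (Iio_mem_nhds (by linarith))
      filter_upwards [hev] with l hl
      filter_upwards [ae_pos hsupp] with θ hθ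
      rw [Real.norm_eq_abs, abs_of_nonneg (nker_nonneg l θ)]
      exact nker_bound hl.1 hl.2.le hθ
    · filter_upwards with θ
      exact (nker_continuous θ).continuousWithinAt
  exact h1.add h2

section main

variable (hsupp : π (Set.Iic 0) = 0) (hint : Integrable (fun θ => min θ (θ ^ 2)) π)
  {lam : ℝ} (hlam : 0 ≤ lam) {u : ℝ → ℝ} (hu : IsMassSolution (Phi α β π) lam u)

include hu in
/-- If `Φ∘u` is integrable on `(0,b]`, then `u` is continuous on `[0,b]`. -/
lemma u_contOn_of_integrable {b : ℝ} (hb : 0 ≤ b)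
    (hib : IntegrableOn (fun s => Phi α β π (u s)) (Ioc 0 b)) :
    ContinuousOn u (Icc 0 b) := by
  have hicc : IntegrableOn (fun s => Phi α β π (u s)) (Icc 0 b) :=
    (integrableOn_Icc_iff_integrableOn_Ioc).2 hib
  have hg : ContinuousOn (fun x => ∫ s in Ioc 0 x, Phi α β π (u s)) (Icc 0 b) :=
    intervalIntegral.continuousOn_primitive hicc
  have : ContinuousOn (fun x => lam * x - ∫ s in Ioc 0 x, Phi α β π (u s)) (Icc 0 b) :=
    (continuousOn_const.mul continuousOn_id).sub hg
  refine this.congr ?_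
  intro x hx
  rw [hu.2.2 x hx.1, intervalIntegral.integral_of_le hx.1]

include hsupp hint hlam hu in
/-- `Φ∘u` is integrable on `(0,T]` for every `T ≥ 0`. -/
lemma integrableOn_phi_u {T : ℝ} (hT : 0 ≤ T) :
    IntegrableOn (fun s => Phi α β π (u s)) (Ioc 0 T) := by
  rcases eq_or_lt_of_le hT with rfl | hTpos
  · simp
  set f : ℝ → ℝ := fun s => Phi α β π (u s) with hf
  by_contra hcon
  -- upper bound for u on [0,T], including the values `lam * t`
  obtain ⟨M, hM⟩ := hu.2.1 T hTpos
  set M' : ℝ := max M (lam * T) with hM'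
  have hrange : ∀ s ∈ Icc (0:ℝ) T, u s ∈ Icc 0 M' := fun s hs =>
    ⟨hu.1 s hs.1, le_max_of_le_left (hM ⟨s, hs, rfl⟩)⟩
  have hM'0 : 0 ≤ M' := (hrange 0 ⟨le_rfl, hT⟩).2.trans' (hu.1 0 le_rfl)
  -- a bound for Phi on [0, M']
  have hphiC : ContinuousOn (Phi α β π) (Icc 0 M') :=
    (phi_continuousOn hsupp hint).mono (Icc_subset_Ici_self)
  obtain ⟨C, hC⟩ := (isCompact_Icc (a := (0:ℝ)) (b := M')).exists_bound_of_continuousOn hphiC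
  -- the set of good endpoints
  set A : Set ℝ := {t | t ∈ Icc 0 T ∧ IntegrableOn f (Ioc 0 t)} with hA
  have h0A : (0:ℝ) ∈ A := ⟨⟨le_rfl, hT⟩, by simp [IntegrableOn]⟩
  have hbddA : BddAbove A := ⟨T, fun t ht => ht.1.2⟩
  set t₀ : ℝ := sSup A with ht₀
  have ht₀0 : 0 ≤ t₀ := le_csSup hbddA h0A
  have ht₀T : t₀ ≤ T := csSup_le ⟨0, h0A⟩ fun t ht => ht.1.2
  -- beyond t₀ the equation degenerates
  have hlin : ∀ t ∈ Ioc t₀ T, u t = lam * t := by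
    intro t ht
    have htA : t ∉ A := fun h => absurd (le_csSup hbddA h) (not_le.2 ht.1)
    have hni : ¬ IntervalIntegrable f volume 0 t := by
      rw [intervalIntegrable_iff_integrableOn_Ioc_of_le (ht₀0.trans ht.1.le)]
      exact fun h => htA ⟨⟨ht₀0.trans ht.1.le, ht.2⟩, h⟩
    have := hu.2.2 t (ht₀0.trans ht.1.le)
    rw [intervalIntegral.integral_undef hni] at this
    simpa using this
  -- integrability on (0, t₀]
  have hi1 : IntegrableOn f (Ioc 0 t₀) := by
    rcases eq_or_lt_of_le ht₀0 with heq | ht₀pos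
    · rw [← heq]; simp
    -- u is continuous on [0, t₀)
    have hucont : ContinuousOn u (Ico 0 t₀) := by
      intro t ht
      obtain ⟨a, haA, hta⟩ := exists_lt_of_lt_csSup ⟨0, h0A⟩ ht.2
      have h1 : ContinuousOn u (Icc 0 a) :=
        u_contOn_of_integrable hu haA.1.1 haA.2
      have h2 : ContinuousWithinAt u (Icc 0 a) t := h1 t ⟨ht.1, hta.le⟩
      refine h2.mono_of_mem_nhdsWithin ?_
      refine Filter.mem_of_superset
        (inter_mem self_mem_nhdsWithin (nhdsWithin_le_nhds (Iio_mem_nhds hta))) ?_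
      rintro x ⟨hx1, hx2⟩
      exact ⟨hx1.1, le_of_lt hx2⟩
    have hfcont : ContinuousOn f (Ico 0 t₀) := by
      refine (phi_continuousOn hsupp hint).comp hucont ?_
      intro s hs
      exact hu.1 s hs.1
    have hioo : IntegrableOn f (Ioo 0 t₀) := by
      have hconst : IntegrableOn (fun _ : ℝ => C) (Ioo 0 t₀) volume :=
        integrableOn_const measure_Ioo_lt_top.ne
      have hmeas : AEStronglyMeasurable f (volume.restrict (Ioo 0 t₀)) :=
        (hfcont.mono Ioo_subset_Ico_self).aestronglyMeasurable measurableSet_Ioo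
      have hbd : ∀ᵐ s ∂(volume.restrict (Ioo 0 t₀)), ‖f s‖ ≤ C := by
        rw [ae_restrict_iff' measurableSet_Ioo]
        filter_upwards with s hs
        exact hC (u s) (hrange s ⟨hs.1.le, hs.2.le.trans ht₀T⟩)
      exact Integrable.mono' hconst hmeas hbd
    exact (integrableOn_Ioc_iff_integrableOn_Ioo).2 hioo
  -- integrability on (t₀, T]
  have hi2 : IntegrableOn f (Ioc t₀ T) := by
    have hcont : ContinuousOn (fun t => Phi α β π (lam * t)) (Icc t₀ T) := by
      refine (phi_continuousOn hsupp hint).comp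
        (continuousOn_const.mul continuousOn_id) ?_
      intro s hs
      exact mul_nonneg hlam (ht₀0.trans hs.1)
    have : IntegrableOn (fun t => Phi α β π (lam * t)) (Ioc t₀ T) :=
      (hcont.integrableOn_Icc).mono_set Ioc_subset_Icc_self
    refine this.congr_fun ?_ measurableSet_Ioc
    intro t ht
    simp only [hf]
    rw [hlin t ht]
  exact hcon (((Ioc_union_Ioc_eq_Ioc ht₀0 ht₀T) ▸ hi1.union hi2 : _))

end main

end FJDB

open FJDB in
/-- Analytic bound underlying Corollary 3.13:
`0 ≤ λ - Φ(u_t(λ)) ≤ λ e^{-αt}`, and hence the density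
`g(t) = x (λ - Φ(u_t(λ))) e^{-x u_t(λ)}` satisfies `g(t) ≤ x λ e^{-αt}`. -/
theorem first_jump_density_bound
    (α β : ℝ) (hβ : 0 ≤ β) (π : Measure ℝ)
    (hsupp : π (Set.Iic 0) = 0) (hσ : SigmaFinite π)
    (hint : Integrable (fun θ => min θ (θ ^ 2)) π)
    (lam : ℝ) (hlam : 0 ≤ lam)
    (u : ℝ → ℝ) (hu : IsMassSolution (Phi α β π) lam u) :
    (∀ t : ℝ, 0 ≤ t →
      0 ≤ lam - Phi α β π (u t) ∧
      lam - Phi α β π (u t) ≤ lam * Real.exp (-α * t)) ∧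
    (∀ x : ℝ, 0 < x → ∀ t : ℝ, 0 ≤ t →
      x * (lam - Phi α β π (u t)) * Real.exp (-x * u t) ≤
        x * lam * Real.exp (-α * t)) := by
  obtain ⟨hnn, hbdd, heq⟩ := hu
  have hu' : IsMassSolution (Phi α β π) lam u := ⟨hnn, hbdd, heq⟩
  set f : ℝ → ℝ := fun t => Phi α β π (u t) with hfdef
  -- interval integrability of f
  have hfii : ∀ ⦃a b : ℝ⦄, 0 ≤ a → a ≤ b → IntervalIntegrable f volume a b := by
    intro a b ha hab
    rw [intervalIntegrable_iff_integrableOn_Ioc_of_le hab]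
    exact (integrableOn_phi_u hsupp hint hlam hu' (ha.trans hab)).mono_set
      (Ioc_subset_Ioc_left ha)
  -- continuity of u on [0,∞)
  have hucont : ContinuousOn u (Ici 0) := by
    intro t ht
    have ht' : (0:ℝ) ≤ t := ht
    have h1 : ContinuousOn u (Icc 0 (t + 1)) :=
      u_contOn_of_integrable hu' (b := t + 1) (by linarith)
        (integrableOn_phi_u hsupp hint hlam hu' (T := t + 1) (by linarith))
    refine (h1 t ⟨ht', by linarith⟩).mono_of_mem_nhdsWithin ?_
    refine Filter.mem_of_superset
      (inter_mem self_mem_nhdsWithin (nhdsWithin_le_nhds (Iio_mem_nhds (show t < t + 1 by linarith)))) ?_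
    rintro x ⟨hx1, hx2⟩
    exact ⟨hx1, hx2.le⟩
  have hfcont : ContinuousOn f (Ici 0) :=
    (phi_continuousOn hsupp hint).comp hucont fun s hs => hnn s hs
  have hu0 : u 0 = 0 := by simpa using heq 0 le_rfl
  -- increment identity
  have hincr : ∀ ⦃s t : ℝ⦄, 0 ≤ s → s ≤ t →
      u t - u s = ∫ r in s..t, (lam - f r) := by
    intro s t hs hst
    have ht0 : 0 ≤ t := hs.trans hst
    have h1 : ∫ r in s..t, (lam - f r) = lam * (t - s) - ∫ r in s..t, f r := by
      rw [intervalIntegral.integral_sub intervalIntegrable_const (hfii hs hst)]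
      rw [intervalIntegral.integral_const]
      simp only [smul_eq_mul]
      ring
    have h2 : (∫ r in (0:ℝ)..t, f r) - (∫ r in (0:ℝ)..s, f r) = ∫ r in s..t, f r :=
      intervalIntegral.integral_interval_sub_left (hfii le_rfl ht0) (hfii le_rfl hs)
    rw [h1, heq t ht0, heq s hs]
    have : (∫ r in (0:ℝ)..t, Phi α β π (u r)) = ∫ r in (0:ℝ)..t, f r := rfl
    linarith [h2]
  -- Claim 1 : f t ≤ lam
  have hf0 : f 0 = 0 := by
    show Phi α β π (u 0) = 0
    rw [hu0, phi_zero]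
  have hclaim1 : ∀ t, 0 ≤ t → f t ≤ lam := by
    intro t₀ ht₀
    by_contra hgt
    push_neg at hgt
    set A : Set ℝ := {s | s ∈ Icc 0 t₀ ∧ f s ≤ lam} with hAdef
    have h0A : (0:ℝ) ∈ A := ⟨⟨le_rfl, ht₀⟩, by rw [hf0]; exact hlam⟩
    have hAbdd : BddAbove A := ⟨t₀, fun s hs => hs.1.2⟩
    have hAclosed : IsClosed A := by
      have : A = Icc 0 t₀ ∩ f ⁻¹' (Iic lam) := rfl
      rw [this]
      exact ContinuousOn.preimage_isClosed_of_isClosed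
        (hfcont.mono (fun s hs => hs.1)) isClosed_Icc isClosed_Iic
    set s₀ : ℝ := sSup A with hs₀def
    have hs₀A : s₀ ∈ A := hAclosed.csSup_mem ⟨0, h0A⟩ hAbdd
    have hs₀0 : 0 ≤ s₀ := hs₀A.1.1
    have hs₀t₀ : s₀ < t₀ := by
      rcases lt_or_eq_of_le hs₀A.1.2 with h | h
      · exact h
      · exact absurd (h ▸ hs₀A.2) (not_le.2 hgt)
    have hfgt : ∀ r, s₀ < r → r ≤ t₀ → lam < f r := by
      intro r h1 h2
      by_contra hle
      push_neg at hle
      exact absurd (le_csSup hAbdd ⟨⟨hs₀0.trans h1.le, h2⟩, hle⟩) (not_le.2 h1)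
    have hup : u s₀ < u t₀ := by
      by_contra hle
      push_neg at hle
      have h3 : Phi α β π (u t₀) ≤ max 0 (Phi α β π (u s₀)) :=
        phi_le_max hβ hsupp hint (hnn t₀ ht₀) hle
      have h4 : f t₀ ≤ lam := h3.trans (max_le hlam hs₀A.2)
      exact absurd h4 (not_le.2 hgt)
    have hpos : 0 < ∫ r in s₀..t₀, (f r - lam) := by
      refine intervalIntegral.intervalIntegral_pos_of_pos_on
        ((hfii hs₀0 hs₀A.1.2).sub intervalIntegrable_const) ?_ hs₀t₀
      intro x hx
      have := hfgt x hx.1 hx.2.le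
      linarith
    have h5 := hincr hs₀0 hs₀A.1.2
    have h6 : ∫ r in s₀..t₀, (lam - f r) = - ∫ r in s₀..t₀, (f r - lam) := by
      rw [← intervalIntegral.integral_neg]
      congr 1
      ext r
      ring
    rw [h6] at h5
    linarith
  -- monotonicity of u
  have humono : ∀ ⦃s t : ℝ⦄, 0 ≤ s → s ≤ t → u s ≤ u t := by
    intro s t hs hst
    have h1 := hincr hs hst
    have h2 : 0 ≤ ∫ r in s..t, (lam - f r) := by
      refine intervalIntegral.integral_nonneg hst ?_
      intro r hr
      have := hclaim1 r (hs.trans hr.1)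
      linarith
    linarith
  -- the auxiliary nonincreasing function G
  set G : ℝ → ℝ := fun t => lam - f t + α * u t with hGdef
  have hGmono : ∀ ⦃s t : ℝ⦄, 0 ≤ s → s ≤ t → G t ≤ G s := by
    intro s t hs hst
    have h1 := phi_increment_lower (α := α) hβ hsupp hint (hnn s hs) (humono hs hst)
    have h2 : f t - f s = Phi α β π (u t) - Phi α β π (u s) := rfl
    show lam - f t + α * u t ≤ lam - f s + α * u s
    linarith
  have hG0 : G 0 = lam := by
    show lam - f 0 + α * u 0 = lam
    rw [hf0, hu0]; ring
  have hGcont : ContinuousOn G (Ici 0) :=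
    (continuousOn_const.sub hfcont).add (continuousOn_const.mul hucont)
  -- derivative of u from the right
  have huderiv : ∀ t, 0 ≤ t → HasDerivWithinAt u (lam - f t) (Ici t) t := by
    intro t ht
    have hIci : Ici t ⊆ Ici (0:ℝ) := Ici_subset_Ici.2 ht
    have hmeas : StronglyMeasurableAtFilter f (𝓝[Ioi t] t) volume :=
      ⟨Ici t, mem_of_superset self_mem_nhdsWithin Ioi_subset_Ici_self,
        (hfcont.mono hIci).aestronglyMeasurable measurableSet_Ici⟩
    have hcw : ContinuousWithinAt f (Ioi t) t :=
      (hfcont t ht).mono (fun x hx => ht.trans (le_of_lt hx))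
    have hprim : HasDerivWithinAt (fun x => ∫ r in (0:ℝ)..x, f r) (f t) (Ici t) t :=
      intervalIntegral.integral_hasDerivWithinAt_right (hfii le_rfl ht) hmeas hcw
    have hlinD : HasDerivWithinAt (fun x : ℝ => lam * x) lam (Ici t) t := by
      simpa using (hasDerivWithinAt_id t (Ici t)).const_mul lam
    have h2 : HasDerivWithinAt (fun x => lam * x - ∫ r in (0:ℝ)..x, f r)
        (lam - f t) (Ici t) t := hlinD.sub hprim
    refine h2.congr ?_ ?_
    · intro y hy
      exact heq y (ht.trans hy)
    · exact heq t ht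
  -- derivative of exp(α·)u
  have hEderiv : ∀ t, 0 ≤ t → HasDerivWithinAt (fun x => Real.exp (α * x) * u x)
      (Real.exp (α * t) * G t) (Ici t) t := by
    intro t ht
    have hexp : HasDerivAt (fun x : ℝ => Real.exp (α * x)) (Real.exp (α * t) * α) t := by
      simpa using ((hasDerivAt_id t).const_mul α).exp
    have h1 := (hexp.hasDerivWithinAt (s := Ici t)).mul (huderiv t ht)
    refine h1.congr_deriv ?_
    have hG : G t = lam - f t + α * u t := rfl
    rw [hG]; ring
  -- FTC identity
  have hFTC : ∀ T, 0 ≤ T →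
      (∫ s in (0:ℝ)..T, Real.exp (α * s) * G s) = Real.exp (α * T) * u T := by
    intro T hT
    have hcontE : ContinuousOn (fun x => Real.exp (α * x) * u x) (Icc 0 T) :=
      ((Real.continuous_exp.comp (continuous_const.mul continuous_id)).continuousOn).mul
        (hucont.mono (fun s hs => hs.1))
    have hint2 : IntervalIntegrable (fun s => Real.exp (α * s) * G s) volume 0 T := by
      refine ContinuousOn.intervalIntegrable_of_Icc hT ?_
      exact ((Real.continuous_exp.comp (continuous_const.mul continuous_id)).continuousOn).mul
        (hGcont.mono (fun s hs => hs.1))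
    have hres := intervalIntegral.integral_eq_sub_of_hasDeriv_right_of_le hT hcontE
      (fun x hx => (hEderiv x hx.1.le).mono Ioi_subset_Ici_self) hint2
    rw [hres, hu0]
    simp
  -- the elementary exponential integral
  have hexpA : ∀ t : ℝ, (∫ r in (0:ℝ)..t, α * Real.exp (α * r)) = Real.exp (α * t) - 1 := by
    intro t
    have hd : ∀ x ∈ uIcc (0:ℝ) t,
        HasDerivAt (fun r : ℝ => Real.exp (α * r)) (α * Real.exp (α * x)) x := by
      intro x _
      have := ((hasDerivAt_id x).const_mul α).exp
      simpa [mul_comm] using this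
    have hi : IntervalIntegrable (fun r => α * Real.exp (α * r)) volume 0 t :=
      Continuous.intervalIntegrable (continuous_const.mul (Real.continuous_exp.comp (continuous_const.mul continuous_id))) 0 t
    rw [intervalIntegral.integral_eq_sub_of_hasDerivAt hd hi]
    simp
  -- the integral Gronwall step
  have hQ : ∀ t, 0 ≤ t → Real.exp (α * t) * (lam - f t) ≤ lam := by
    intro t ht
    have hFT := hFTC t ht
    have hcontEG : ContinuousOn (fun r => Real.exp (α * r) * G r) (Icc 0 t) :=
      ((Real.continuous_exp.comp (continuous_const.mul continuous_id)).continuousOn).mul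
        (hGcont.mono (fun s hs => hs.1))
    have hEGint : IntervalIntegrable (fun r => Real.exp (α * r) * G r) volume 0 t :=
      hcontEG.intervalIntegrable_of_Icc ht
    have hexpand : Real.exp (α * t) * (lam - f t)
        = Real.exp (α * t) * G t - α * (Real.exp (α * t) * u t) := by
      have hG : G t = lam - f t + α * u t := rfl
      rw [hG]; ring
    have hGt0 : G t ≤ lam := by
      have := hGmono le_rfl ht
      rw [hG0] at this
      exact this
    obtain hα | hα := le_total 0 α
    · -- α ≥ 0 : compare the integrand with `G t`
      have hptwise : ∀ r ∈ Icc (0:ℝ) t,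
          α * Real.exp (α * r) * G t ≤ α * (Real.exp (α * r) * G r) := by
        intro r hr
        have h1 : G t ≤ G r := hGmono hr.1 hr.2
        have h2 : 0 ≤ α * Real.exp (α * r) := by positivity
        nlinarith [mul_le_mul_of_nonneg_left h1 h2]
      have hi1 : IntervalIntegrable (fun r : ℝ => α * Real.exp (α * r) * G t) volume 0 t :=
        Continuous.intervalIntegrable (by fun_prop) 0 t
      have hmono := intervalIntegral.integral_mono_on
        (f := fun r : ℝ => α * Real.exp (α * r) * G t)
        (g := fun r : ℝ => α * (Real.exp (α * r) * G r)) ht hi1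
        (hEGint.const_mul α) hptwise
      have hL : (∫ r in (0:ℝ)..t, α * Real.exp (α * r) * G t)
          = (Real.exp (α * t) - 1) * G t := by
        rw [intervalIntegral.integral_mul_const, hexpA]
      have hR : (∫ r in (0:ℝ)..t, α * (Real.exp (α * r) * G r))
          = α * (Real.exp (α * t) * u t) := by
        rw [intervalIntegral.integral_const_mul, hFT]
      rw [hL, hR] at hmono
      have hE1 : (1:ℝ) ≤ Real.exp (α * t) := Real.one_le_exp (by positivity)
      rw [hexpand]
      nlinarith [hmono, hGt0, hE1]
    · -- α ≤ 0 : compare the integrand with `lam = G 0`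
      have hptwise : ∀ r ∈ Icc (0:ℝ) t,
          α * Real.exp (α * r) * lam ≤ α * (Real.exp (α * r) * G r) := by
        intro r hr
        have h1 : G r ≤ lam := by
          have := hGmono le_rfl hr.1
          rw [hG0] at this
          exact this
        have h2 : α * Real.exp (α * r) ≤ 0 :=
          mul_nonpos_of_nonpos_of_nonneg hα (Real.exp_pos _).le
        nlinarith [mul_nonpos_of_nonpos_of_nonneg h2 (sub_nonneg.2 h1)]
      have hi1 : IntervalIntegrable (fun r : ℝ => α * Real.exp (α * r) * lam) volume 0 t :=
        Continuous.intervalIntegrable (by fun_prop) 0 t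
      have hmono := intervalIntegral.integral_mono_on
        (f := fun r : ℝ => α * Real.exp (α * r) * lam)
        (g := fun r : ℝ => α * (Real.exp (α * r) * G r)) ht hi1
        (hEGint.const_mul α) hptwise
      have hL : (∫ r in (0:ℝ)..t, α * Real.exp (α * r) * lam)
          = (Real.exp (α * t) - 1) * lam := by
        rw [intervalIntegral.integral_mul_const, hexpA]
      have hR : (∫ r in (0:ℝ)..t, α * (Real.exp (α * r) * G r))
          = α * (Real.exp (α * t) * u t) := by
        rw [intervalIntegral.integral_const_mul, hFT]
      rw [hL, hR] at hmono
      have h3 : Real.exp (α * t) * G t ≤ Real.exp (α * t) * lam :=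
        mul_le_mul_of_nonneg_left hGt0 (Real.exp_pos _).le
      rw [hexpand]
      linarith [hmono, h3]
  -- conclusion, part 1
  have hpart1 : ∀ t : ℝ, 0 ≤ t →
      0 ≤ lam - Phi α β π (u t) ∧
      lam - Phi α β π (u t) ≤ lam * Real.exp (-α * t) := by
    intro t ht
    have h1 : f t ≤ lam := hclaim1 t ht
    constructor
    · show 0 ≤ lam - f t
      linarith
    · show lam - f t ≤ lam * Real.exp (-α * t)
      have h2 := hQ t ht
      have hE : (0:ℝ) < Real.exp (α * t) := Real.exp_pos _
      rw [show -α * t = -(α * t) by ring, Real.exp_neg, ← div_eq_mul_inv, le_div_iff₀ hE]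
      nlinarith [h2]
  refine ⟨hpart1, ?_⟩
  -- conclusion, part 2
  intro x hx t ht
  obtain ⟨h1, h2⟩ := hpart1 t ht
  have hexp1 : Real.exp (-x * u t) ≤ 1 := by
    rw [Real.exp_le_one_iff]
    have := hnn t ht
    nlinarith
  have h3 : 0 ≤ x * (lam - Phi α β π (u t)) := mul_nonneg hx.le h1
  calc x * (lam - Phi α β π (u t)) * Real.exp (-x * u t)
      ≤ x * (lam - Phi α β π (u t)) * 1 := mul_le_mul_of_nonneg_left hexp1 h3
    _ = x * (lam - Phi α β π (u t)) := by ring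
    _ ≤ x * (lam * Real.exp (-α * t)) := mul_le_mul_of_nonneg_left h2 hx.le
    _ = x * lam * Real.exp (-α * t) := by ring
end
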